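/- arXiv:1209.5367 — 4 statements merged into one kernel-verified Lean document; each statement's English description precedes it below -/
import Mathlib

section
/- The space of vectors in H fixed by every translation is one-dimensional: for φ ∈ H, one has τ_z φ = φ for all z ∈ ℤ^n if and only if φ is a scalar multiple of the quiescent basis vector e_{c₀}. -/
open scoped ENNReal

noncomputable section

namespace QCA

abbrev Lat (n : ℕ) : Type := Fin n → ℤ

def Conf (n : ℕ) (A : Type*) (q0 : A) : Type _ :=
  {c : Lat n → A // {x : Lat n | c x ≠ q0}.Finite}

def c0 (n : ℕ) (A : Type*) (q0 : A) : Conf n A q0 :=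
  ⟨fun _ => q0, by simp⟩

abbrev H (n : ℕ) (A : Type*) (q0 : A) : Type _ := lp (fun _ : Conf n A q0 => ℂ) 2

def eVec {n : ℕ} {A : Type*} {q0 : A} (c : Conf n A q0) : H n A q0 :=
  letI : DecidableEq (Conf n A q0) := Classical.decEq _
  lp.single 2 c 1

/-- Translation of a configuration by `z`: the configuration `x ↦ c (x + z)`. -/
def shiftConf {n : ℕ} {A : Type*} {q0 : A} (z : Lat n) (c : Conf n A q0) : Conf n A q0 :=
  ⟨fun x => c.1 (x + z), by
    have h : {x : Lat n | c.1 (x + z) ≠ q0} ⊆ (fun x : Lat n => x + z) ⁻¹' {x | c.1 x ≠ q0} :=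
      fun x hx => hx
    exact (c.2.preimage ((add_left_injective z).injOn)).subset h⟩

/-- Translation by `z` as a permutation of the set of finite configurations. -/
def shiftEquiv {n : ℕ} {A : Type*} (q0 : A) (z : Lat n) : Conf n A q0 ≃ Conf n A q0 where
  toFun := shiftConf z
  invFun := shiftConf (-z)
  left_inv c := Subtype.ext (funext fun x => by
    show c.1 (x + -z + z) = c.1 x
    rw [neg_add_cancel_right])
  right_inv c := Subtype.ext (funext fun x => by
    show c.1 (x + z + -z) = c.1 x
    rw [add_neg_cancel_right])

theorem memℓp_comp_equiv {ι κ : Type*} (e : κ ≃ ι) {f : ι → ℂ} (hf : Memℓp f 2) :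
    Memℓp (fun k => f (e k)) 2 := by
  have hp : 0 < (2 : ℝ≥0∞).toReal := by norm_num
  exact memℓp_gen ((e.summable_iff
    (f := fun i => ‖f i‖ ^ (2 : ℝ≥0∞).toReal)).mpr (hf.summable hp))

/-- The unitary operator on `ℓ²` induced by a permutation of the index set. -/
def lpCongr {ι κ : Type*} (e : ι ≃ κ) :
    lp (fun _ : ι => ℂ) 2 ≃ₗᵢ[ℂ] lp (fun _ : κ => ℂ) 2 where
  toLinearEquiv :=
    { toFun := fun f => ⟨fun k => f (e.symm k), memℓp_comp_equiv e.symm (lp.memℓp f)⟩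
      map_add' := fun f g => lp.ext (funext fun k => by
        simp [lp.coeFn_add] <;> rfl)
      map_smul' := fun r f => lp.ext (funext fun k => by
        simp [lp.coeFn_smul])
      invFun := fun g => ⟨fun i => g (e i), memℓp_comp_equiv e (lp.memℓp g)⟩
      left_inv := fun f => lp.ext (funext fun i => by simp)
      right_inv := fun g => lp.ext (funext fun k => by simp) }
  norm_map' := fun f => by
    have hp : 0 < (2 : ℝ≥0∞).toReal := by norm_num
    rw [lp.norm_eq_tsum_rpow hp, lp.norm_eq_tsum_rpow hp]
    congr 1
    exact e.symm.tsum_eq (fun i => ‖f i‖ ^ (2 : ℝ≥0∞).toReal)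

/-- The translation operator `τ_z` on the Hilbert space of finite configurations. -/
def tau {n : ℕ} {A : Type*} (q0 : A) (z : Lat n) : H n A q0 ≃ₗᵢ[ℂ] H n A q0 :=
  lpCongr (shiftEquiv q0 z)

/-- A bounded operator on `H` is translation invariant if `τ_z ∘ M ∘ τ_z⁻¹ = M` for all `z`. -/
def TranslationInvariant {n : ℕ} {A : Type*} (q0 : A) (M : H n A q0 →L[ℂ] H n A q0) : Prop :=
  ∀ (z : Lat n) (v : H n A q0), tau q0 z (M ((tau q0 z).symm v)) = M v


section Local

variable {n : ℕ} {A : Type*} [Fintype A]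

/-- The configuration agreeing with `f` on `D` and with `c` outside `D`. -/
def override {q0 : A} (D : Finset (Lat n)) (f : {x // x ∈ D} → A) (c : Conf n A q0) :
    Conf n A q0 :=
  ⟨fun x => if h : x ∈ D then f ⟨x, h⟩ else c.1 x, by
    refine Set.Finite.subset (Set.Finite.union D.finite_toSet c.2) ?_
    intro x hx
    rcases Decidable.em (x ∈ D) with h | h
    · exact Set.mem_union_left _ h
    · exact Set.mem_union_right _ (by simpa [h] using hx)⟩

/-- A bounded operator on the Hilbert space of finite configurations is local upon the finite
set `D` of cells if its action on basis vectors only modifies, and only reads, the cells in `D`. -/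
def IsLocalUpon (q0 : A) (D : Finset (Lat n)) (T : H n A q0 →L[ℂ] H n A q0) : Prop :=
  ∃ a : ({x // x ∈ D} → A) → ({x // x ∈ D} → A) → ℂ, ∀ c : Conf n A q0,
    T (eVec c) = ∑ f : {x // x ∈ D} → A,
      a f (fun x => c.1 x.1) • eVec (override D f c)

/-- The neighborhood of the cell `x`: `𝒩_x = {x + k : k ∈ 𝒩}`. -/
def nbhd {n : ℕ} (𝒩 : Finset (Lat n)) (x : Lat n) : Finset (Lat n) :=
  𝒩.image (fun k => x + k)

/-- The reflected neighborhood of the cell `x`: `𝒱_x = {x - k : k ∈ 𝒩}`. -/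
def rnbhd {n : ℕ} (𝒩 : Finset (Lat n)) (x : Lat n) : Finset (Lat n) :=
  𝒩.image (fun k => x - k)

/-- A unitary `M` is causal relative to the neighborhood `𝒩` if conjugation `M† A M` maps
operators local upon a cell `x` to operators local upon `𝒩_x`. -/
def Causal (q0 : A) (𝒩 : Finset (Lat n)) (M : H n A q0 →L[ℂ] H n A q0) : Prop :=
  ∀ (x : Lat n) (B : H n A q0 →L[ℂ] H n A q0), IsLocalUpon q0 {x} B →
    IsLocalUpon q0 (nbhd 𝒩 x) (ContinuousLinearMap.adjoint M ∘L B ∘L M)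

end Local

/-- The standard basis vector of the one-cell Hilbert space `ℂ^A`. -/
def wVec (A : Type*) [Fintype A] (a : A) : EuclideanSpace ℂ A :=
  letI : DecidableEq A := Classical.decEq A
  EuclideanSpace.single a 1

/-- The configuration obtained from `c` by replacing the value at the cell `x` by `r`. -/
def updateConf {n : ℕ} {A : Type*} {q0 : A} (x : Lat n) (r : A) (c : Conf n A q0) :
    Conf n A q0 :=
  ⟨Function.update c.1 x r, by
    refine Set.Finite.subset (c.2.union (Set.finite_singleton x)) ?_
    intro y hy
    rcases eq_or_ne y x with rfl | hxy
    · exact Set.mem_union_right _ rfl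
    · exact Set.mem_union_left _ (by
        simpa [Function.update_of_ne hxy] using hy)⟩

/-- The subalgebra `𝔇_{y,x}` of `End(ℂ^A)`: endomorphisms `a` of the one-cell Hilbert space
such that the operator `ι_x(a)` local upon `{x}` implementing `a` at the cell `x` is of the form
`R† B R` for some operator `B` local upon `{x - y}`. -/
def Dset {n : ℕ} {A : Type*} [Fintype A] (q0 : A)
    (R : H n A q0 →L[ℂ] H n A q0) (y x : Lat n) :
    Set (Module.End ℂ (EuclideanSpace ℂ A)) :=
  {a | ∃ B : H n A q0 →L[ℂ] H n A q0, IsLocalUpon q0 {x - y} B ∧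
    ∀ c : Conf n A q0,
      (ContinuousLinearMap.adjoint R ∘L B ∘L R) (eVec c) =
        ∑ q : A, (inner ℂ (wVec A q) (a (wVec A (c.1 x))) : ℂ) • eVec (updateConf x q c)}



section Component

variable {n : ℕ} {𝒩 : Finset (Lat n)} {K : {z // z ∈ 𝒩} → Type*}

/-- The propagation map on configurations in component form:
`(s c) x z = (c (x + z)) z`. -/
def sConf (qz : ∀ z : {z // z ∈ 𝒩}, K z) (c : Conf n (∀ z : {z // z ∈ 𝒩}, K z) qz) :
    Conf n (∀ z : {z // z ∈ 𝒩}, K z) qz :=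
  ⟨fun x z => c.1 (x + z.1) z, by
    refine Set.Finite.subset
      (Set.finite_iUnion (fun z : {z // z ∈ 𝒩} =>
        (c.2.preimage ((add_left_injective z.1).injOn)))) ?_
    intro x hx
    obtain ⟨z, hz⟩ := Function.ne_iff.mp hx
    exact Set.mem_iUnion.2 ⟨z, fun h => hz (congrFun h z)⟩⟩

end Component

/-- The support of a finite configuration, as a `Finset`. -/
def suppF {n : ℕ} {A : Type*} {q0 : A} (c : Conf n A q0) : Finset (Lat n) :=
  c.2.toFinset

/-- The property characterizing the local isomorphism `S̃ : H → Ĥ` induced by a one-cell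
unitary `S : W → Ŵ`. -/
def StildeProp {n : ℕ} {A B : Type*} [Fintype A] [Fintype B] (q0 : A) (qh : B)
    (Slin : EuclideanSpace ℂ A ≃ₗᵢ[ℂ] EuclideanSpace ℂ B)
    (St : H n A q0 ≃ₗᵢ[ℂ] H n B qh) : Prop :=
  ∀ c : Conf n A q0,
    St (eVec c) = ∑ g : {x // x ∈ suppF c} → B,
      (∏ x : {x // x ∈ suppF c}, (inner ℂ (wVec B (g x)) (Slin (wVec A (c.1 x.1))) : ℂ)) •
        eVec (override (suppF c) g (c0 n B qh))

/-- An endomorphism of the one-cell Hilbert space `ℂ^P`, `P = Π_{z ∈ 𝒩} K z`, acting only on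
the `y`-th coordinate. -/
def ActsOnCoord {n : ℕ} {𝒩 : Finset (Lat n)} {K : {z // z ∈ 𝒩} → Type*}
    [∀ z, Fintype (K z)] (y : {z // z ∈ 𝒩})
    (Aop : Module.End ℂ (EuclideanSpace ℂ (∀ z : {z // z ∈ 𝒩}, K z))) : Prop :=
  ∃ f : K y → K y → ℂ, ∀ p p' : ∀ z : {z // z ∈ 𝒩}, K z,
    ((∀ z : {z // z ∈ 𝒩}, z ≠ y → p z = p' z) →
      (inner ℂ (wVec _ p) (Aop (wVec _ p')) : ℂ) = f (p y) (p' y)) ∧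
    (¬ (∀ z : {z // z ∈ 𝒩}, z ≠ y → p z = p' z) →
      (inner ℂ (wVec _ p) (Aop (wVec _ p')) : ℂ) = 0)

/-- A factorization of the module `W` as a tensor product `⨂_{k} V k` carrying the sets of
endomorphisms `Dsets k` onto the endomorphisms acting on the `k`-th tensor factor alone. -/
structure PiTensorFactorization (ι : Type) [Fintype ι] [DecidableEq ι]
    (W : Type*) [AddCommGroup W] [Module ℂ W]
    (Dsets : ι → Set (Module.End ℂ W)) : Type _ where
  /-- The tensor factors. -/
  V : ι → Type
  [grp : ∀ k, AddCommGroup (V k)]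
  [mod : ∀ k, Module ℂ (V k)]
  fin : ∀ k, FiniteDimensional ℂ (V k)
  /-- The linear isomorphism with the tensor product. -/
  S : W ≃ₗ[ℂ] PiTensorProduct ℂ V
  cond : ∀ y : ι,
    (fun a : Module.End ℂ W => S.conj a) '' (Dsets y) =
      Set.range (fun f : Module.End ℂ (V y) =>
        (PiTensorProduct.map
          (Function.update (fun k => (LinearMap.id : V k →ₗ[ℂ] V k)) y f) :
            Module.End ℂ (PiTensorProduct ℂ V)))

/-- The continuous linear map underlying a linear isometry equivalence. -/
def isomCLM {E F : Type*} [NormedAddCommGroup E] [NormedAddCommGroup F]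
    [NormedSpace ℂ E] [NormedSpace ℂ F] (e : E ≃ₗᵢ[ℂ] F) : E →L[ℂ] F :=
  e.toLinearIsometry.toContinuousLinearMap



lemma tau_apply {n : ℕ} {A : Type*} (q0 : A) (z : Lat n) (ψ : H n A q0) (c : Conf n A q0) :
    (tau q0 z ψ) c = ψ (shiftConf (-z) c) := rfl

lemma shiftConf_c0 {n : ℕ} {A : Type*} (q0 : A) (z : Lat n) :
    shiftConf z (c0 n A q0) = c0 n A q0 := Subtype.ext rfl

/-- The space of vectors in `H` fixed by every translation is one-dimensional:
for `φ ∈ H`, one has `τ_z φ = φ` for all `z ∈ ℤ^n` if and only if `φ` is a scalar multiple of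
the quiescent basis vector `e_{c₀}`. -/
theorem translation_invariant_vectors_one_dimensional
    (n : ℕ) (hn : 1 ≤ n) (Q : Type) [Fintype Q] (q₀ : Q) (φ : H n Q q₀) :
    (∀ z : Lat n, tau q₀ z φ = φ) ↔ ∃ a : ℂ, φ = a • eVec (c0 n Q q₀) := by
  constructor
  · intro hφ
    classical
    have hinv : ∀ (z : Lat n) (c : Conf n Q q₀), φ (shiftConf z c) = φ c := by
      intro z c
      have h := congrArg (fun ψ : H n Q q₀ => ψ c) (hφ (-z))
      simp only [tau_apply, neg_neg] at h
      exact h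
    have hzero : ∀ c : Conf n Q q₀, c ≠ c0 n Q q₀ → φ c = 0 := by
      intro c hc
      set i0 : Fin n := ⟨0, hn⟩ with hi0
      set w : Lat n := Pi.single i0 1 with hw
      have hx0 : ∃ x0 : Lat n, c.1 x0 ≠ q₀ := by
        by_contra h
        push_neg at h
        exact hc (Subtype.ext (funext h))
      obtain ⟨x0, hx0⟩ := hx0
      have hginj : Function.Injective (fun m : ℤ => shiftConf (m • w) c) := by
        intro m1 m2 h12
        by_contra hne
        have hd : ∀ y : Lat n, c.1 (y + (m1 - m2) • w) = c.1 y := by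
          intro y
          have h := congrArg (fun c' : Conf n Q q₀ => c'.1 (y - m2 • w)) h12
          simp only [shiftConf] at h
          have e1 : y - m2 • w + m1 • w = y + (m1 - m2) • w := by
            rw [sub_smul]; abel
          have e2 : y - m2 • w + m2 • w = y := by abel
          rw [e1, e2] at h
          exact h
        have hmem : ∀ j : ℕ, c.1 (x0 + (j : ℤ) • ((m1 - m2) • w)) ≠ q₀ := by
          intro j
          induction j with
          | zero => simpa using hx0
          | succ k ih =>
            have : x0 + ((k : ℤ) + 1) • ((m1 - m2) • w)
                = (x0 + (k : ℤ) • ((m1 - m2) • w)) + (m1 - m2) • w := by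
              rw [add_smul]; abel
            rw [Nat.cast_succ, this, hd]
            exact ih
        have hfin : {x : Lat n | c.1 x ≠ q₀}.Infinite := by
          refine Set.infinite_of_injective_forall_mem
            (f := fun j : ℕ => x0 + (j : ℤ) • ((m1 - m2) • w)) ?_ hmem
          intro j1 j2 hj
          have h := congrFun hj i0
          simp only [Pi.add_apply, Pi.smul_apply, hw, Pi.single_eq_same, smul_eq_mul,
            mul_one] at h
          have : (j1 : ℤ) = j2 := by
            have hm : (m1 - m2) ≠ 0 := sub_ne_zero.mpr hne
            exact mul_right_cancel₀ hm (by linarith)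
          exact_mod_cast this
        exact hfin c.2
      have hp : (0 : ℝ) < (2 : ℝ≥0∞).toReal := by norm_num
      have hs := (lp.memℓp φ).summable hp
      have hs2 := hs.comp_injective hginj
      have hsc : Summable (fun _ : ℤ => ‖φ c‖ ^ (2 : ℝ≥0∞).toReal) := by
        refine hs2.congr fun m => ?_
        simp only [Function.comp_apply, hinv]
      have h0 : ‖φ c‖ ^ (2 : ℝ≥0∞).toReal = 0 := (summable_const_iff _).mp hsc
      have : ‖φ c‖ = 0 := by
        have h2 : (2 : ℝ≥0∞).toReal ≠ 0 := by norm_num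
        rcases (Real.rpow_eq_zero (norm_nonneg _) h2).mp h0 with h
        exact h
      simpa using this
    refine ⟨φ (c0 n Q q₀), ?_⟩
    letI : DecidableEq (Conf n Q q₀) := Classical.decEq _
    refine lp.ext (funext fun c => ?_)
    have hsmul : (φ (c0 n Q q₀) • eVec (c0 n Q q₀)) c
        = φ (c0 n Q q₀) • (eVec (c0 n Q q₀) c) := by
      rw [lp.coeFn_smul]; rfl
    rcases eq_or_ne c (c0 n Q q₀) with rfl | hc
    · rw [hsmul]
      simp [eVec, lp.single_apply_self]
    · rw [hsmul, hzero c hc]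
      simp [eVec, lp.single_apply_ne _ _ _ hc, Pi.single_apply, hc]
  · rintro ⟨a, rfl⟩ z
    letI : DecidableEq (Conf n Q q₀) := Classical.decEq _
    rw [map_smul]
    congr 1
    refine lp.ext (funext fun c => ?_)
    rw [tau_apply]
    rcases eq_or_ne c (c0 n Q q₀) with rfl | hc
    · rw [shiftConf_c0]
    · have hne : shiftConf (-z) c ≠ c0 n Q q₀ := by
        intro h
        exact hc ((shiftEquiv q₀ (-z)).injective (h.trans (shiftConf_c0 q₀ (-z)).symm))
      show eVec (c0 n Q q₀) (shiftConf (-z) c) = eVec (c0 n Q q₀) c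
      simp [eVec, lp.single_apply_ne _ _ _ hne, lp.single_apply_ne _ _ _ hc, Pi.single_apply, hc, hne]

end QCA
end
end

section
/- Let M : H → H be a bounded invertible operator (a continuous linear equivalence) that is translation-invariant. Then there exists λ ∈ ℂ with λ ≠ 0 such that M e_{c₀} = λ • e_{c₀}. If moreover M is a linear isometry, then |λ| = 1. -/
open scoped ENNReal

noncomputable section

namespace QCA

theorem eVec_apply_self {n : ℕ} {A : Type*} {q0 : A} (c : Conf n A q0) :
    (eVec c : ∀ _ : Conf n A q0, ℂ) c = 1 := by
  letI : DecidableEq (Conf n A q0) := Classical.decEq _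
  exact lp.single_apply_self _ _ _

theorem eVec_apply_ne {n : ℕ} {A : Type*} {q0 : A} {c d : Conf n A q0} (h : d ≠ c) :
    (eVec c : ∀ _ : Conf n A q0, ℂ) d = 0 := by
  letI : DecidableEq (Conf n A q0) := Classical.decEq _
  exact lp.single_apply_ne _ _ _ h

/-- A bounded invertible translation-invariant operator has the quiescent basis
vector as an eigenvector, with nonzero eigenvalue; if the operator is moreover an isometry the
eigenvalue has modulus one. -/
theorem invertible_translation_invariant_quiescent_eigenvector
    (n : ℕ) (hn : 1 ≤ n) (Q : Type) [Fintype Q] (q₀ : Q)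
    (M : H n Q q₀ ≃L[ℂ] H n Q q₀)
    (hM : ∀ (z : Lat n) (v : H n Q q₀), tau q₀ z (M ((tau q₀ z).symm v)) = M v) :
    ∃ lam : ℂ, lam ≠ 0 ∧ M (eVec (c0 n Q q₀)) = lam • eVec (c0 n Q q₀) ∧
      ((∀ v : H n Q q₀, ‖M v‖ = ‖v‖) → ‖lam‖ = 1) := by
  classical
  set w : H n Q q₀ := M (eVec (c0 n Q q₀)) with hw
  -- basic facts
  have hshift_c0 : ∀ z : Lat n, shiftConf z (c0 n Q q₀) = c0 n Q q₀ := fun z => rfl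
  -- tau symm fixes eVec c0
  have htaus : ∀ z : Lat n, (tau q₀ z).symm (eVec (c0 n Q q₀)) = eVec (c0 n Q q₀) := by
    intro z
    apply lp.ext
    funext c
    show (eVec (c0 n Q q₀) : ∀ _, ℂ) (shiftConf z c) = (eVec (c0 n Q q₀) : ∀ _, ℂ) c
    have hiff : shiftConf z c = c0 n Q q₀ ↔ c = c0 n Q q₀ := by
      constructor
      · intro h
        have h2 : shiftConf (-z) (shiftConf z c) = c := (shiftEquiv q₀ z).left_inv c
        rw [h, hshift_c0] at h2
        exact h2.symm
      · rintro rfl; exact hshift_c0 z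
    by_cases hc : c = c0 n Q q₀
    · rw [hc, hshift_c0 z]
    · rw [eVec_apply_ne (fun h => hc (hiff.mp h)), eVec_apply_ne hc]
  -- translation invariance of w as a function
  have hinv : ∀ (z : Lat n) (c : Conf n Q q₀), w (shiftConf z c) = w c := by
    intro z c
    have h1 := hM (-z) (eVec (c0 n Q q₀))
    rw [htaus] at h1
    have h2 : (tau q₀ (-z) w : ∀ _, ℂ) c = w c := by rw [h1]
    have h3 : (tau q₀ (-z) w : ∀ _, ℂ) c = w ((shiftEquiv q₀ (-z)).symm c) := rfl
    have h4 : (shiftEquiv q₀ (-z)).symm c = shiftConf z c := by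
      show shiftConf (-(-z)) c = shiftConf z c
      rw [neg_neg]
    rw [h3, h4] at h2
    exact h2
  -- w vanishes away from c0
  have hzero : ∀ c : Conf n Q q₀, c ≠ c0 n Q q₀ → w c = 0 := by
    intro c hc
    by_contra hwc
    -- support element
    have hex : ∃ x : Lat n, c.1 x ≠ q₀ := by
      by_contra h
      push_neg at h
      exact hc (Subtype.ext (funext h))
    obtain ⟨x0, hx0⟩ := hex
    have j : Fin n := ⟨0, hn⟩
    -- injectivity of k ↦ shiftConf (const k) c
    have hinj : Function.Injective (fun k : ℤ => shiftConf (fun _ => k) c) := by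
      intro k k' h
      by_contra hkk
      set p : Lat n := (fun _ => k) - (fun _ => k') with hp
      have hper : ∀ y : Lat n, c.1 (y + p) = c.1 y := by
        intro y
        have := congrFun (congrArg Subtype.val h) (y - (fun _ => k'))
        simp only [shiftConf] at this
        have e1 : y - (fun _ => k') + (fun _ : Fin n => k) = y + p := by
          funext i; simp [hp]; ring
        have e2 : y - (fun _ => k') + (fun _ : Fin n => k') = y := by
          funext i; simp
        rw [e1, e2] at this
        exact this
      have hiter : ∀ (m : ℕ), c.1 (x0 + m • p) ≠ q₀ := by
        intro m
        induction m with
        | zero => simpa using hx0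
        | succ m ih =>
          have : x0 + (m + 1 : ℕ) • p = (x0 + m • p) + p := by
            rw [add_smul, one_smul, add_assoc]
          rw [this, hper]
          exact ih
      have hfinj : Function.Injective (fun m : ℕ => x0 + m • p) := by
        intro m m' hm
        have hj := congrFun hm j
        simp only [Pi.add_apply, Pi.smul_apply] at hj
        have hpj : p j ≠ 0 := by
          simp only [hp, Pi.sub_apply]
          exact sub_ne_zero.mpr hkk
        have h5 : m • p j = m' • p j := add_left_cancel hj
        rw [nsmul_eq_mul, nsmul_eq_mul] at h5
        have h6 := mul_right_cancel₀ hpj h5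
        exact_mod_cast h6
      have hinf : ({x : Lat n | c.1 x ≠ q₀}).Infinite :=
        Set.infinite_of_injective_forall_mem hfinj (fun m => hiter m)
      exact Set.not_infinite.mpr c.2 hinf
    -- infinite set where |w| is constant
    have horb : ∀ k : ℤ, w (shiftConf (fun _ => k) c) = w c := fun k => hinv _ c
    have hTinf : {c' : Conf n Q q₀ | w c' = w c}.Infinite :=
      Set.infinite_of_injective_forall_mem hinj (fun k => horb k)
    -- summability
    have hsum : Summable (fun c' : Conf n Q q₀ => ‖w c'‖ ^ (2 : ℝ≥0∞).toReal) :=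
      (lp.memℓp w).summable (by norm_num)
    have ht : (0:ℝ) < ‖w c‖ ^ (2 : ℝ≥0∞).toReal := by
      apply Real.rpow_pos_of_pos
      exact norm_pos_iff.mpr hwc
    have hev : ∀ᶠ c' in Filter.cofinite,
        ‖w c'‖ ^ (2 : ℝ≥0∞).toReal < ‖w c‖ ^ (2 : ℝ≥0∞).toReal :=
      hsum.tendsto_cofinite_zero.eventually (gt_mem_nhds ht)
    have hfin : {c' : Conf n Q q₀ |
        ¬ ‖w c'‖ ^ (2 : ℝ≥0∞).toReal < ‖w c‖ ^ (2 : ℝ≥0∞).toReal}.Finite := hev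
    exact Set.not_infinite.mpr (hfin.subset (fun c' hc' => by
      simp only [Set.mem_setOf_eq] at hc' ⊢
      rw [hc']
      exact lt_irrefl _)) hTinf
  set lam : ℂ := w (c0 n Q q₀) with hlam
  have heq : M (eVec (c0 n Q q₀)) = lam • eVec (c0 n Q q₀) := by
    rw [← hw]
    apply lp.ext
    funext c
    rw [lp.coeFn_smul, Pi.smul_apply]
    by_cases hc : c = c0 n Q q₀
    · rw [hc, eVec_apply_self, smul_eq_mul, mul_one]
    · rw [eVec_apply_ne hc, hzero c hc, smul_zero]
  have hevec_ne : eVec (c0 n Q q₀) ≠ 0 := by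
    intro h
    have h2 := congrFun (congrArg (Subtype.val) h) (c0 n Q q₀)
    rw [eVec_apply_self] at h2
    simp at h2
  have hlam_ne : lam ≠ 0 := by
    intro h
    rw [h, zero_smul] at heq
    exact hevec_ne (M.injective (by rw [heq, map_zero]))
  refine ⟨lam, hlam_ne, heq, ?_⟩
  intro hiso
  have := hiso (eVec (c0 n Q q₀))
  rw [heq, norm_smul] at this
  have hn0 : ‖eVec (c0 n Q q₀)‖ ≠ 0 := norm_ne_zero_iff.mpr hevec_ne
  have h1 : ‖lam‖ = 1 := mul_right_cancel₀ hn0 (by rw [one_mul]; exact this)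
  exact h1

end QCA
end
end

section
/- (Density Theorem, weak operator topology.) For every bounded operator A on H, every ε > 0, every m ∈ ℕ, and all families of vectors v, u : Fin m → H, there exist a finite subset D ⊆ ℤ^n and a bounded operator T on H that is local upon D such that |⟪u i, A (v i) − T (v i)⟫| < ε for all i; that is, the local operators are dense in the bounded operators on H in the weak operator topology. -/
open scoped ENNReal

noncomputable section

namespace QCA

section Density

set_option linter.unusedSectionVars false

variable {n : ℕ} {Q : Type} [Fintype Q] {q₀ : Q}

/-- The `ℓ²` norm squared is the sum of the coordinate norms squared. -/
theorem hasSum_norm_sq (y : H n Q q₀) :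
    HasSum (fun c : Conf n Q q₀ => ‖y c‖ ^ 2) (‖y‖ ^ 2) := by
  have hp : 0 < (2 : ℝ≥0∞).toReal := by norm_num
  have h := lp.hasSum_norm hp y
  have e : (2 : ℝ≥0∞).toReal = ((2 : ℕ) : ℝ) := by norm_num
  rw [e] at h
  simpa [Real.rpow_natCast] using h

theorem summable_norm_sq (y : H n Q q₀) :
    Summable (fun c : Conf n Q q₀ => ‖y c‖ ^ 2) :=
  ⟨_, hasSum_norm_sq y⟩

theorem norm_sq_eq (y : H n Q q₀) :
    ‖y‖ ^ 2 = ∑' c : Conf n Q q₀, ‖y c‖ ^ 2 :=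
  (hasSum_norm_sq y).tsum_eq.symm

theorem memℓp_of_sq {f : Conf n Q q₀ → ℂ}
    (h : Summable fun c => ‖f c‖ ^ 2) : Memℓp f 2 := by
  apply memℓp_gen
  have e : (2 : ℝ≥0∞).toReal = ((2 : ℕ) : ℝ) := by norm_num
  rw [e]
  simpa [Real.rpow_natCast] using h

open Classical in
theorem eVec_apply (c c' : Conf n Q q₀) :
    (eVec c : ∀ _ : Conf n Q q₀, ℂ) c' = if c' = c then 1 else 0 := by
  classical
  by_cases h : c' = c
  · subst h; simp [eVec, lp.single_apply_self]
  · simp [eVec, lp.single_apply_ne _ _ _ h, h]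

theorem inner_eVec_left (c : Conf n Q q₀) (z : H n Q q₀) :
    (inner ℂ (eVec c) z : ℂ) = z c := by
  classical
  rw [eVec]
  rw [lp.inner_single_left]
  simp

variable (q₀) in
/-- The pattern of a configuration on `D`. -/
def patD (D : Finset (Lat n)) (c : Conf n Q q₀) : {x // x ∈ D} → Q :=
  fun x => c.1 x.1

theorem override_apply_mem (D : Finset (Lat n)) (f : {x // x ∈ D} → Q)
    (c : Conf n Q q₀) {x : Lat n} (h : x ∈ D) :
    (override D f c).1 x = f ⟨x, h⟩ := dif_pos h

theorem override_apply_not_mem (D : Finset (Lat n)) (f : {x // x ∈ D} → Q)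
    (c : Conf n Q q₀) {x : Lat n} (h : x ∉ D) :
    (override D f c).1 x = c.1 x := dif_neg h

theorem patD_override (D : Finset (Lat n)) (f : {x // x ∈ D} → Q) (c : Conf n Q q₀) :
    patD q₀ D (override D f c) = f := by
  funext x
  exact override_apply_mem D f c x.2

theorem override_override (D : Finset (Lat n)) (f g : {x // x ∈ D} → Q) (c : Conf n Q q₀) :
    override D f (override D g c) = override D f c := by
  refine Subtype.ext (funext fun x => ?_)
  by_cases h : x ∈ D
  · rw [override_apply_mem D f _ h, override_apply_mem D f c h]
  · rw [override_apply_not_mem D f _ h, override_apply_not_mem D g c h,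
      override_apply_not_mem D f c h]

theorem override_patD (D : Finset (Lat n)) (c : Conf n Q q₀) :
    override D (patD q₀ D c) c = c := by
  refine Subtype.ext (funext fun x => ?_)
  by_cases h : x ∈ D
  · rw [override_apply_mem D _ c h]; rfl
  · rw [override_apply_not_mem D _ c h]

theorem override_eq_iff (D : Finset (Lat n)) (f : {x // x ∈ D} → Q) (c c' : Conf n Q q₀) :
    override D f c' = c ↔ f = patD q₀ D c ∧ ∀ x ∉ D, c'.1 x = c.1 x := by
  constructor
  · rintro rfl
    exact ⟨(patD_override D f c').symm,
      fun x hx => (override_apply_not_mem D f c' hx).symm⟩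
  · rintro ⟨rfl, hoff⟩
    refine Subtype.ext (funext fun x => ?_)
    by_cases h : x ∈ D
    · rw [override_apply_mem D _ c' h]; rfl
    · rw [override_apply_not_mem D _ c' h]; exact hoff x h

variable (q₀) in
/-- The basis configuration supported in `D` with pattern `f`. -/
def FD (D : Finset (Lat n)) (f : {x // x ∈ D} → Q) : Conf n Q q₀ :=
  override D f (c0 n Q q₀)

theorem FD_injective (D : Finset (Lat n)) : Function.Injective (FD q₀ D) := by
  intro f g h
  have := congrArg (patD q₀ D) h
  rwa [FD, FD, patD_override, patD_override] at this

theorem patD_FD (D : Finset (Lat n)) (f : {x // x ∈ D} → Q) :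
    patD q₀ D (FD q₀ D f) = f := patD_override D f _

theorem override_FD (D : Finset (Lat n)) (f g : {x // x ∈ D} → Q) :
    override D f (FD q₀ D g) = FD q₀ D f := override_override D f g _

variable (q₀) in
/-- Configurations quiescent on `D`. -/
def ResD (D : Finset (Lat n)) : Type _ :=
  {c : Conf n Q q₀ // ∀ x ∈ D, c.1 x = q₀}

variable (q₀) in
/-- Splitting a configuration into its pattern on `D` and its residue off `D`. -/
def confEquiv (D : Finset (Lat n)) :
    Conf n Q q₀ ≃ ({x // x ∈ D} → Q) × ResD q₀ D where
  toFun c := ⟨patD q₀ D c,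
    ⟨override D (fun _ => q₀) c, fun x hx => override_apply_mem D _ c hx⟩⟩
  invFun p := override D p.1 p.2.1
  left_inv c := by
    show override D (patD q₀ D c) (override D (fun _ => q₀) c) = c
    rw [override_override, override_patD]
  right_inv p := by
    refine Prod.ext (patD_override D _ _) (Subtype.ext ?_)
    show override D (fun _ => q₀) (override D p.1 p.2.1) = p.2.1
    rw [override_override]
    refine Subtype.ext (funext fun x => ?_)
    by_cases h : x ∈ D
    · rw [override_apply_mem D _ _ h, p.2.2 x h]
    · rw [override_apply_not_mem D _ _ h]

section Op

variable (A : H n Q q₀ →L[ℂ] H n Q q₀) (D : Finset (Lat n))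

variable (q₀) in
/-- The matrix of `A` compressed to the configurations supported in `D`. -/
def coefA : ({x // x ∈ D} → Q) → ({x // x ∈ D} → Q) → ℂ :=
  fun f g => (A (eVec (FD q₀ D g))) (FD q₀ D f)

theorem sumVec_apply_F (x : ({x // x ∈ D} → Q) → ℂ) (f : {x // x ∈ D} → Q) :
    ((∑ g : {x // x ∈ D} → Q, x g • eVec (FD q₀ D g) : H n Q q₀) :
      ∀ _ : Conf n Q q₀, ℂ) (FD q₀ D f) = x f := by
  classical
  rw [lp.coeFn_sum, Finset.sum_apply]
  rw [Finset.sum_eq_single f]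
  · rw [lp.coeFn_smul, Pi.smul_apply, eVec_apply, if_pos rfl, smul_eq_mul, mul_one]
  · intro g _ hg
    rw [lp.coeFn_smul, Pi.smul_apply, eVec_apply,
      if_neg (fun h => hg (FD_injective D h).symm), smul_eq_mul, mul_zero]
  · intro h; exact absurd (Finset.mem_univ f) h

theorem sumVec_apply_not (x : ({x // x ∈ D} → Q) → ℂ) (c : Conf n Q q₀)
    (h : ∀ f, c ≠ FD q₀ D f) :
    ((∑ g : {x // x ∈ D} → Q, x g • eVec (FD q₀ D g) : H n Q q₀) :
      ∀ _ : Conf n Q q₀, ℂ) c = 0 := by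
  classical
  rw [lp.coeFn_sum, Finset.sum_apply]
  refine Finset.sum_eq_zero fun g _ => ?_
  rw [lp.coeFn_smul, Pi.smul_apply, eVec_apply, if_neg (h g), smul_eq_mul, mul_zero]

theorem sumVec_norm_sq (x : ({x // x ∈ D} → Q) → ℂ) :
    ‖(∑ g : {x // x ∈ D} → Q, x g • eVec (FD q₀ D g) : H n Q q₀)‖ ^ 2 =
      ∑ g : {x // x ∈ D} → Q, ‖x g‖ ^ 2 := by
  classical
  set w : H n Q q₀ := ∑ g : {x // x ∈ D} → Q, x g • eVec (FD q₀ D g) with hw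
  rw [norm_sq_eq w]
  rw [tsum_eq_sum (s := Finset.univ.image (FD q₀ D))
    (fun c hc => by
      rw [sumVec_apply_not D x c (fun f h => hc (by
        rw [h]; exact Finset.mem_image_of_mem _ (Finset.mem_univ f)))]
      simp)]
  rw [Finset.sum_image (fun f _ g _ h => FD_injective D h)]
  refine Finset.sum_congr rfl fun f _ => ?_
  rw [sumVec_apply_F D x f]

/-- The compressed matrix has operator norm at most `‖A‖`. -/
theorem key_bound (x : ({x // x ∈ D} → Q) → ℂ) :
    ∑ f : {x // x ∈ D} → Q, ‖∑ g : {x // x ∈ D} → Q, coefA q₀ A D f g * x g‖ ^ 2 ≤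
      ‖A‖ ^ 2 * ∑ g : {x // x ∈ D} → Q, ‖x g‖ ^ 2 := by
  classical
  set w : H n Q q₀ := ∑ g : {x // x ∈ D} → Q, x g • eVec (FD q₀ D g) with hw
  have hAw : ∀ f, (A w : ∀ _ : Conf n Q q₀, ℂ) (FD q₀ D f) =
      ∑ g : {x // x ∈ D} → Q, coefA q₀ A D f g * x g := by
    intro f
    have : A w = ∑ g : {x // x ∈ D} → Q, x g • A (eVec (FD q₀ D g)) := by
      rw [hw, map_sum]
      exact Finset.sum_congr rfl fun g _ => by rw [map_smul]
    rw [this, lp.coeFn_sum, Finset.sum_apply]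
    refine Finset.sum_congr rfl fun g _ => ?_
    rw [lp.coeFn_smul, Pi.smul_apply, smul_eq_mul, coefA, mul_comm]
  have h1 : ∑ f : {x // x ∈ D} → Q, ‖∑ g : {x // x ∈ D} → Q, coefA q₀ A D f g * x g‖ ^ 2 ≤
      ‖A w‖ ^ 2 := by
    rw [norm_sq_eq (A w)]
    have h0 := Finset.sum_image (s := Finset.univ) (g := FD q₀ D)
      (f := fun c => ‖(A w : ∀ _ : Conf n Q q₀, ℂ) c‖ ^ 2)
      (fun f _ g _ h => FD_injective D h)
    calc ∑ f : {x // x ∈ D} → Q, ‖∑ g : {x // x ∈ D} → Q, coefA q₀ A D f g * x g‖ ^ 2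
        = ∑ f : {x // x ∈ D} → Q, ‖(A w : ∀ _ : Conf n Q q₀, ℂ) (FD q₀ D f)‖ ^ 2 := by
          refine Finset.sum_congr rfl fun f _ => by rw [hAw f]
      _ = ∑ c ∈ Finset.univ.image (FD q₀ D), ‖(A w : ∀ _ : Conf n Q q₀, ℂ) c‖ ^ 2 := h0.symm
      _ ≤ ∑' c : Conf n Q q₀, ‖(A w) c‖ ^ 2 := by
          refine Summable.sum_le_tsum _ (fun c _ => by positivity) (summable_norm_sq (A w))
  have h2 : ‖A w‖ ^ 2 ≤ ‖A‖ ^ 2 * ‖w‖ ^ 2 := by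
    have := A.le_opNorm w
    nlinarith [norm_nonneg (A w), norm_nonneg w, norm_nonneg A]
  calc ∑ f : {x // x ∈ D} → Q, ‖∑ g : {x // x ∈ D} → Q, coefA q₀ A D f g * x g‖ ^ 2
      ≤ ‖A‖ ^ 2 * ‖w‖ ^ 2 := h1.trans h2
    _ = ‖A‖ ^ 2 * ∑ g : {x // x ∈ D} → Q, ‖x g‖ ^ 2 := by rw [hw, sumVec_norm_sq]

variable (q₀) in
/-- The local compression of `A` upon `D`, as a function on coordinates. -/
def Tfun (vv : Conf n Q q₀ → ℂ) (c : Conf n Q q₀) : ℂ :=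
  ∑ g : {x // x ∈ D} → Q, coefA q₀ A D (patD q₀ D c) g * vv (override D g c)

theorem Tfun_summable_and_bound (v : H n Q q₀) :
    Summable (fun c => ‖Tfun q₀ A D (⇑v) c‖ ^ 2) ∧
      ∑' c : Conf n Q q₀, ‖Tfun q₀ A D (⇑v) c‖ ^ 2 ≤ ‖A‖ ^ 2 * ‖v‖ ^ 2 := by
  classical
  set e := confEquiv q₀ D with he
  have hcomp : ∀ p : ({x // x ∈ D} → Q) × ResD q₀ D,
      Tfun q₀ A D (⇑v) (e.symm p) =
        ∑ g : {x // x ∈ D} → Q, coefA q₀ A D p.1 g * v (override D g p.2.1) := by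
    rintro ⟨f, r⟩
    have h1 : e.symm (f, r) = override D f r.1 := rfl
    rw [h1, Tfun, patD_override]
    refine Finset.sum_congr rfl fun g _ => by rw [override_override]
  -- injectivity of residues
  have hinj : ∀ g : {x // x ∈ D} → Q,
      Function.Injective (fun r : ResD q₀ D => override D g r.1) := by
    intro g r r' h
    refine Subtype.ext (Subtype.ext (funext fun x => ?_))
    by_cases hx : x ∈ D
    · rw [r.2 x hx, r'.2 x hx]
    · have := congrArg (fun c : Conf n Q q₀ => c.1 x) h
      simpa [override_apply_not_mem D g _ hx] using this
  have hxg : ∀ g : {x // x ∈ D} → Q,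
      Summable (fun r : ResD q₀ D => ‖v (override D g r.1)‖ ^ 2) := by
    intro g
    exact (summable_norm_sq v).comp_injective (hinj g)
  have hGsum : Summable (fun r : ResD q₀ D =>
      ∑ g : {x // x ∈ D} → Q, ‖v (override D g r.1)‖ ^ 2) :=
    summable_sum fun g _ => hxg g
  -- per-pattern summability
  have hfib : ∀ f : {x // x ∈ D} → Q,
      Summable (fun r : ResD q₀ D =>
        ‖∑ g : {x // x ∈ D} → Q, coefA q₀ A D f g * v (override D g r.1)‖ ^ 2) := by
    intro f
    refine Summable.of_nonneg_of_le (fun r => by positivity)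
      (fun r => ?_) (hGsum.mul_left (‖A‖ ^ 2))
    calc ‖∑ g : {x // x ∈ D} → Q, coefA q₀ A D f g * v (override D g r.1)‖ ^ 2
        ≤ ∑ f' : {x // x ∈ D} → Q,
            ‖∑ g : {x // x ∈ D} → Q, coefA q₀ A D f' g * v (override D g r.1)‖ ^ 2 :=
          Finset.single_le_sum
            (f := fun f' => ‖∑ g : {x // x ∈ D} → Q,
              coefA q₀ A D f' g * v (override D g r.1)‖ ^ 2)
            (fun f' _ => by positivity) (Finset.mem_univ f)
      _ ≤ ‖A‖ ^ 2 * ∑ g : {x // x ∈ D} → Q, ‖v (override D g r.1)‖ ^ 2 :=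
          key_bound A D _
  have hprodsum : Summable (fun p : ({x // x ∈ D} → Q) × ResD q₀ D =>
      ‖Tfun q₀ A D (⇑v) (e.symm p)‖ ^ 2) := by
    refine (summable_prod_of_nonneg (fun p => by positivity)).2 ⟨fun f => ?_, ?_⟩
    · simp only [hcomp]
      exact hfib f
    · exact Summable.of_finite
  have hsum : Summable (fun c => ‖Tfun q₀ A D (⇑v) c‖ ^ 2) :=
    e.symm.summable_iff.1 hprodsum
  refine ⟨hsum, ?_⟩
  have hts : ∑' c : Conf n Q q₀, ‖Tfun q₀ A D (⇑v) c‖ ^ 2 =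
      ∑' p : ({x // x ∈ D} → Q) × ResD q₀ D, ‖Tfun q₀ A D (⇑v) (e.symm p)‖ ^ 2 :=
    (e.symm.tsum_eq fun c => ‖Tfun q₀ A D (⇑v) c‖ ^ 2).symm
  rw [hts]
  have h1 : ∑' p : ({x // x ∈ D} → Q) × ResD q₀ D, ‖Tfun q₀ A D (⇑v) (e.symm p)‖ ^ 2 =
      ∑' (f : {x // x ∈ D} → Q) (r : ResD q₀ D),
        ‖∑ g : {x // x ∈ D} → Q, coefA q₀ A D f g * v (override D g r.1)‖ ^ 2 := by
    rw [Summable.tsum_prod' hprodsum (fun f => hprodsum.prod_factor f)]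
    congr 1
    funext f
    congr 1
    funext r
    rw [hcomp ⟨f, r⟩]
  rw [h1, tsum_fintype]
  have h2 : ∑ f : {x // x ∈ D} → Q, ∑' r : ResD q₀ D,
      ‖∑ g : {x // x ∈ D} → Q, coefA q₀ A D f g * v (override D g r.1)‖ ^ 2 =
      ∑' r : ResD q₀ D, ∑ f : {x // x ∈ D} → Q,
        ‖∑ g : {x // x ∈ D} → Q, coefA q₀ A D f g * v (override D g r.1)‖ ^ 2 :=
    (Summable.tsum_finsetSum fun f _ => hfib f).symm
  rw [h2]
  have h3 : ∑' r : ResD q₀ D, ∑ f : {x // x ∈ D} → Q,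
      ‖∑ g : {x // x ∈ D} → Q, coefA q₀ A D f g * v (override D g r.1)‖ ^ 2 ≤
      ∑' r : ResD q₀ D, ‖A‖ ^ 2 * ∑ g : {x // x ∈ D} → Q, ‖v (override D g r.1)‖ ^ 2 :=
    Summable.tsum_le_tsum (fun r => key_bound A D _) (summable_sum fun f _ => hfib f)
      (hGsum.mul_left _)
  refine h3.trans ?_
  rw [tsum_mul_left]
  have h4 : ∑' r : ResD q₀ D, ∑ g : {x // x ∈ D} → Q, ‖v (override D g r.1)‖ ^ 2 =
      ‖v‖ ^ 2 := by
    have hvprod : Summable (fun p : ({x // x ∈ D} → Q) × ResD q₀ D =>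
        ‖v (override D p.1 p.2.1)‖ ^ 2) := by
      have : (fun p : ({x // x ∈ D} → Q) × ResD q₀ D => ‖v (override D p.1 p.2.1)‖ ^ 2) =
          (fun c => ‖v c‖ ^ 2) ∘ e.symm := rfl
      rw [this]
      exact (summable_norm_sq v).comp_injective e.symm.injective
    calc ∑' r : ResD q₀ D, ∑ g : {x // x ∈ D} → Q, ‖v (override D g r.1)‖ ^ 2
        = ∑ g : {x // x ∈ D} → Q, ∑' r : ResD q₀ D, ‖v (override D g r.1)‖ ^ 2 :=
          Summable.tsum_finsetSum (fun g _ => hxg g)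
      _ = ∑' (g : {x // x ∈ D} → Q) (r : ResD q₀ D), ‖v (override D g r.1)‖ ^ 2 :=
          (tsum_fintype _).symm
      _ = ∑' p : ({x // x ∈ D} → Q) × ResD q₀ D, ‖v (override D p.1 p.2.1)‖ ^ 2 :=
          (Summable.tsum_prod' hvprod (fun g => hvprod.prod_factor g)).symm
      _ = ∑' c : Conf n Q q₀, ‖v c‖ ^ 2 := e.symm.tsum_eq fun c => ‖v c‖ ^ 2
      _ = ‖v‖ ^ 2 := (norm_sq_eq v).symm
  rw [h4]

variable (q₀) in
/-- The local compression of `A` upon `D`, as a linear map. -/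
def TLin : H n Q q₀ →ₗ[ℂ] H n Q q₀ where
  toFun v := ⟨Tfun q₀ A D (⇑v), memℓp_of_sq (Tfun_summable_and_bound A D v).1⟩
  map_add' v w := by
    refine lp.ext (funext fun c => ?_)
    show Tfun q₀ A D (⇑(v + w)) c = Tfun q₀ A D (⇑v) c + Tfun q₀ A D (⇑w) c
    simp only [Tfun, lp.coeFn_add, Pi.add_apply, mul_add]
    rw [Finset.sum_add_distrib]
  map_smul' r v := by
    refine lp.ext (funext fun c => ?_)
    show Tfun q₀ A D (⇑(r • v)) c = r * Tfun q₀ A D (⇑v) c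
    simp only [Tfun, lp.coeFn_smul, Pi.smul_apply, smul_eq_mul, Finset.mul_sum]
    exact Finset.sum_congr rfl fun g _ => by ring

theorem TLin_norm_le (v : H n Q q₀) : ‖TLin q₀ A D v‖ ≤ ‖A‖ * ‖v‖ := by
  have hb := (Tfun_summable_and_bound A D v).2
  have h1 : ‖TLin q₀ A D v‖ ^ 2 ≤ (‖A‖ * ‖v‖) ^ 2 := by
    rw [norm_sq_eq (TLin q₀ A D v)]
    calc ∑' c : Conf n Q q₀, ‖(TLin q₀ A D v) c‖ ^ 2
        = ∑' c : Conf n Q q₀, ‖Tfun q₀ A D (⇑v) c‖ ^ 2 := rfl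
      _ ≤ ‖A‖ ^ 2 * ‖v‖ ^ 2 := hb
      _ = (‖A‖ * ‖v‖) ^ 2 := (mul_pow _ _ _).symm
  nlinarith [norm_nonneg (TLin q₀ A D v), mul_nonneg (norm_nonneg A) (norm_nonneg v)]

variable (q₀) in
/-- The local compression of `A` upon `D`, as a bounded operator. -/
def TOp : H n Q q₀ →L[ℂ] H n Q q₀ :=
  (TLin q₀ A D).mkContinuous ‖A‖ (TLin_norm_le A D)

theorem TOp_apply_coe (v : H n Q q₀) :
    (TOp q₀ A D v : ∀ _ : Conf n Q q₀, ℂ) = Tfun q₀ A D (⇑v) := rfl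

theorem TOp_norm_le : ‖TOp q₀ A D‖ ≤ ‖A‖ :=
  LinearMap.mkContinuous_norm_le _ (norm_nonneg A) _

theorem TOp_eVec (c : Conf n Q q₀) :
    TOp q₀ A D (eVec c) = ∑ f : {x // x ∈ D} → Q,
      coefA q₀ A D f (patD q₀ D c) • eVec (override D f c) := by
  classical
  refine lp.ext (funext fun c' => ?_)
  rw [TOp_apply_coe]
  rw [lp.coeFn_sum, Finset.sum_apply]
  show Tfun q₀ A D (⇑(eVec c)) c' = _
  rw [Tfun]
  by_cases hoff : ∀ x ∉ D, c'.1 x = c.1 x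
  · have hL : ∀ g : {x // x ∈ D} → Q, override D g c' = c ↔ g = patD q₀ D c := fun g =>
      ⟨fun h => ((override_eq_iff D g c c').1 h).1,
       fun h => (override_eq_iff D g c c').2 ⟨h, hoff⟩⟩
    have hR : ∀ f : {x // x ∈ D} → Q, c' = override D f c ↔ f = patD q₀ D c' := fun f =>
      ⟨fun h => ((override_eq_iff D f c' c).1 h.symm).1,
       fun h => ((override_eq_iff D f c' c).2 ⟨h, fun x hx => (hoff x hx).symm⟩).symm⟩
    rw [Finset.sum_eq_single (patD q₀ D c)]
    · rw [Finset.sum_eq_single (patD q₀ D c')]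
      · rw [eVec_apply, if_pos ((hL _).2 rfl), mul_one, lp.coeFn_smul, Pi.smul_apply,
          eVec_apply, if_pos ((hR _).2 rfl), smul_eq_mul, mul_one]
      · intro f _ hf
        rw [lp.coeFn_smul, Pi.smul_apply, eVec_apply, if_neg (fun h => hf ((hR f).1 h)),
          smul_eq_mul, mul_zero]
      · intro h; exact absurd (Finset.mem_univ _) h
    · intro g _ hg
      rw [eVec_apply, if_neg (fun h => hg ((hL g).1 h)), mul_zero]
    · intro h; exact absurd (Finset.mem_univ _) h
  · push_neg at hoff
    obtain ⟨x, hx, hne⟩ := hoff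
    rw [Finset.sum_eq_zero, Finset.sum_eq_zero]
    · intro f _
      rw [lp.coeFn_smul, Pi.smul_apply, eVec_apply, if_neg, smul_eq_mul, mul_zero]
      intro h
      exact hne (((override_eq_iff D f c' c).1 h.symm).2 x hx).symm
    · intro g _
      rw [eVec_apply, if_neg, mul_zero]
      intro h
      exact hne (((override_eq_iff D g c c').1 h).2 x hx)

theorem TOp_local : IsLocalUpon q₀ D (TOp q₀ A D) :=
  ⟨coefA q₀ A D, fun c => TOp_eVec A D c⟩

theorem Tfun_eVec_F (g f : {x // x ∈ D} → Q) :
    Tfun q₀ A D (⇑(eVec (FD q₀ D g))) (FD q₀ D f) = coefA q₀ A D f g := by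
  classical
  rw [Tfun, patD_FD]
  rw [Finset.sum_eq_single g]
  · rw [override_FD, eVec_apply, if_pos rfl, mul_one]
  · intro h _ hh
    rw [override_FD, eVec_apply, if_neg (fun hc => hh (FD_injective D hc)), mul_zero]
  · intro h; exact absurd (Finset.mem_univ g) h

theorem inner_sumVec_left (x : ({x // x ∈ D} → Q) → ℂ) (z : H n Q q₀) :
    (inner ℂ (∑ g : {x // x ∈ D} → Q, x g • eVec (FD q₀ D g) : H n Q q₀) z : ℂ) =
      ∑ g : {x // x ∈ D} → Q, (starRingEnd ℂ) (x g) * z (FD q₀ D g) := by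
  rw [sum_inner]
  refine Finset.sum_congr rfl fun g _ => ?_
  rw [inner_smul_left, inner_eVec_left]

/-- The projection of `A - T` to the `D`-supported span vanishes. -/
theorem inner_proj_zero (uu vv : H n Q q₀) :
    (inner ℂ (∑ f : {x // x ∈ D} → Q, (uu (FD q₀ D f)) • eVec (FD q₀ D f) : H n Q q₀)
      ((A - TOp q₀ A D)
        (∑ g : {x // x ∈ D} → Q, (vv (FD q₀ D g)) • eVec (FD q₀ D g))) : ℂ) = 0 := by
  classical
  set B : H n Q q₀ →L[ℂ] H n Q q₀ := A - TOp q₀ A D with hB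
  rw [inner_sumVec_left]
  refine Finset.sum_eq_zero fun f _ => ?_
  have hz : (B (∑ g : {x // x ∈ D} → Q, (vv (FD q₀ D g)) • eVec (FD q₀ D g)) :
      ∀ _ : Conf n Q q₀, ℂ) (FD q₀ D f) = 0 := by
    have h1 : B (∑ g : {x // x ∈ D} → Q, (vv (FD q₀ D g)) • eVec (FD q₀ D g)) =
        ∑ g : {x // x ∈ D} → Q, (vv (FD q₀ D g)) • B (eVec (FD q₀ D g)) := by
      rw [map_sum]
      exact Finset.sum_congr rfl fun g _ => by rw [map_smul]
    rw [h1, lp.coeFn_sum, Finset.sum_apply]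
    refine Finset.sum_eq_zero fun g _ => ?_
    rw [lp.coeFn_smul, Pi.smul_apply]
    have hBg : (B (eVec (FD q₀ D g)) : ∀ _ : Conf n Q q₀, ℂ) (FD q₀ D f) = 0 := by
      rw [hB, ContinuousLinearMap.sub_apply, lp.coeFn_sub, Pi.sub_apply]
      have h2 : (TOp q₀ A D (eVec (FD q₀ D g)) : ∀ _ : Conf n Q q₀, ℂ) (FD q₀ D f) =
          coefA q₀ A D f g := by
        rw [TOp_apply_coe, Tfun_eVec_F]
      rw [h2]
      exact sub_eq_zero.2 rfl
    rw [hBg, smul_zero]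
  rw [hz, mul_zero]

/-- The error of the `D`-supported truncation is controlled by the tail of a weight. -/
theorem proj_err_le (y : H n Q q₀) (W : Conf n Q q₀ → ℝ) (hWsum : Summable W)
    (hy : ∀ c, ‖y c‖ ^ 2 ≤ W c) (s : Finset (Conf n Q q₀))
    (hsD : ∀ c ∈ s, c = FD q₀ D (patD q₀ D c)) :
    ‖y - ∑ f : {x // x ∈ D} → Q, (y (FD q₀ D f)) • eVec (FD q₀ D f)‖ ^ 2 ≤
      ∑' c : {x : Conf n Q q₀ // x ∉ s}, W c := by
  classical
  have hWnonneg : ∀ c, 0 ≤ W c := fun c => le_trans (by positivity) (hy c)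
  set y' : H n Q q₀ := ∑ f : {x // x ∈ D} → Q, (y (FD q₀ D f)) • eVec (FD q₀ D f) with hy'
  have hcoord : ∀ c, ‖(y - y') c‖ ^ 2 ≤
      Set.indicator {x : Conf n Q q₀ | x ∉ s} W c := by
    intro c
    by_cases hcs : c ∈ s
    · have hzero : ((y - y' : H n Q q₀) : ∀ _ : Conf n Q q₀, ℂ) c = 0 := by
        rw [lp.coeFn_sub, Pi.sub_apply]
        conv_lhs => rw [hsD c hcs]
        rw [hy', sumVec_apply_F D (fun f => y (FD q₀ D f)), sub_self]
      rw [hzero]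
      have : c ∉ {x : Conf n Q q₀ | x ∉ s} := by simp [hcs]
      rw [Set.indicator_of_notMem this]
      simp
    · rw [Set.indicator_of_mem (by exact hcs) W]
      rw [lp.coeFn_sub, Pi.sub_apply]
      by_cases hr : ∃ f, c = FD q₀ D f
      · obtain ⟨f, rfl⟩ := hr
        rw [hy', sumVec_apply_F D (fun f => y (FD q₀ D f)), sub_self]
        simpa using hWnonneg _
      · push_neg at hr
        rw [hy', sumVec_apply_not D (fun f => y (FD q₀ D f)) c hr, sub_zero]
        exact hy c
  have h1 : ‖y - y'‖ ^ 2 ≤ ∑' c, Set.indicator {x : Conf n Q q₀ | x ∉ s} W c := by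
    rw [norm_sq_eq]
    exact Summable.tsum_le_tsum hcoord (summable_norm_sq (y - y')) (hWsum.indicator _)
  have h2 : ∑' c : {x : Conf n Q q₀ // x ∉ s}, W c =
      ∑' c, Set.indicator {x : Conf n Q q₀ | x ∉ s} W c :=
    tsum_subtype {x : Conf n Q q₀ | x ∉ s} W
  rw [← h2] at h1
  exact h1

end Op


end Density

set_option maxHeartbeats 2000000 in
/-- Density Theorem, weak operator topology. The local operators are dense in
the bounded operators on `H` in the weak operator topology. -/
theorem local_operators_dense_weak
    (n : ℕ) (hn : 1 ≤ n) (Q : Type) [Fintype Q] (q₀ : Q)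
    (A : H n Q q₀ →L[ℂ] H n Q q₀) (ε : ℝ) (hε : 0 < ε) (m : ℕ)
    (v u : Fin m → H n Q q₀) :
    ∃ (D : Finset (Lat n)) (T : H n Q q₀ →L[ℂ] H n Q q₀),
      IsLocalUpon q₀ D T ∧
        ∀ i : Fin m, ‖(inner ℂ (u i) (A (v i) - T (v i)) : ℂ)‖ < ε := by
  classical
  -- the weight function controlling all coordinates at once
  set W : Conf n Q q₀ → ℝ := fun c => ∑ i : Fin m, (‖u i c‖ ^ 2 + ‖v i c‖ ^ 2) with hWdef
  have hWsum : Summable W :=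
    summable_sum fun i _ => (summable_norm_sq (u i)).add (summable_norm_sq (v i))
  have hWu : ∀ (i : Fin m) c, ‖u i c‖ ^ 2 ≤ W c := by
    intro i c
    have h1 : ‖u i c‖ ^ 2 + ‖v i c‖ ^ 2 ≤ W c :=
      Finset.single_le_sum (f := fun j : Fin m => ‖u j c‖ ^ 2 + ‖v j c‖ ^ 2)
        (fun j _ => by positivity) (Finset.mem_univ i)
    nlinarith [sq_nonneg ‖v i c‖]
  have hWv : ∀ (i : Fin m) c, ‖v i c‖ ^ 2 ≤ W c := by
    intro i c
    have h1 : ‖u i c‖ ^ 2 + ‖v i c‖ ^ 2 ≤ W c :=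
      Finset.single_le_sum (f := fun j : Fin m => ‖u j c‖ ^ 2 + ‖v j c‖ ^ 2)
        (fun j _ => by positivity) (Finset.mem_univ i)
    nlinarith [sq_nonneg ‖u i c‖]
  -- constants
  set N : ℝ := 1 + ∑ i : Fin m, (‖u i‖ + ‖v i‖) with hNdef
  have hN1 : 1 ≤ N := by
    have : (0 : ℝ) ≤ ∑ i : Fin m, (‖u i‖ + ‖v i‖) :=
      Finset.sum_nonneg fun i _ => by positivity
    linarith
  have hNu : ∀ i : Fin m, ‖u i‖ ≤ N := by
    intro i
    have h1 : ‖u i‖ + ‖v i‖ ≤ ∑ j : Fin m, (‖u j‖ + ‖v j‖) :=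
      Finset.single_le_sum (f := fun j : Fin m => ‖u j‖ + ‖v j‖)
        (fun j _ => by positivity) (Finset.mem_univ i)
    have h2 : 0 ≤ ‖v i‖ := norm_nonneg _
    simp only [hNdef]
    linarith
  have hNv : ∀ i : Fin m, ‖v i‖ ≤ N := by
    intro i
    have h1 : ‖u i‖ + ‖v i‖ ≤ ∑ j : Fin m, (‖u j‖ + ‖v j‖) :=
      Finset.single_le_sum (f := fun j : Fin m => ‖u j‖ + ‖v j‖)
        (fun j _ => by positivity) (Finset.mem_univ i)
    have h2 : 0 ≤ ‖u i‖ := norm_nonneg _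
    simp only [hNdef]
    linarith
  set C : ℝ := ‖A‖ + 1 with hCdef
  have hC1 : 1 ≤ C := by
    have := norm_nonneg A
    simp only [hCdef]; linarith
  have hAC : ‖A‖ ≤ C := by simp only [hCdef]; linarith
  set δ : ℝ := min 1 (ε / (8 * C * N)) with hδdef
  have hδpos : 0 < δ := lt_min one_pos (div_pos hε (by positivity))
  have hδ1 : δ ≤ 1 := min_le_left _ _
  have hδ2 : δ * (8 * C * N) ≤ ε := by
    have h1 : δ ≤ ε / (8 * C * N) := min_le_right _ _
    have h2 : (0 : ℝ) < 8 * C * N := by positivity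
    calc δ * (8 * C * N) ≤ ε / (8 * C * N) * (8 * C * N) := by
          exact mul_le_mul_of_nonneg_right h1 (le_of_lt h2)
      _ = ε := div_mul_cancel₀ ε (ne_of_gt h2)
  -- choose the tail finset
  have htail := (tendsto_tsum_compl_atTop_zero W).eventually_lt_const
    (show (0 : ℝ) < δ ^ 2 by positivity)
  obtain ⟨s, hs⟩ := htail.exists
  -- the region
  set D : Finset (Lat n) := s.biUnion (fun c => suppF c) with hDdef
  have hsD : ∀ c ∈ s, c = FD q₀ D (patD q₀ D c) := by
    intro c hc
    refine Subtype.ext (funext fun x => ?_)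
    by_cases h : x ∈ D
    · rw [FD, override_apply_mem D _ _ h]; rfl
    · rw [FD, override_apply_not_mem D _ _ h]
      show c.1 x = q₀
      by_contra hne
      exact h (Finset.mem_biUnion.2 ⟨c, hc, (Set.Finite.mem_toFinset c.2).2 hne⟩)
  refine ⟨D, TOp q₀ A D, TOp_local A D, fun i => ?_⟩
  set B : H n Q q₀ →L[ℂ] H n Q q₀ := A - TOp q₀ A D with hBdef
  have hBnorm : ‖B‖ ≤ 2 * C := by
    have h1 := norm_sub_le A (TOp q₀ A D)
    have h2 := TOp_norm_le A D
    simp only [hBdef]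
    calc ‖A - TOp q₀ A D‖ ≤ ‖A‖ + ‖TOp q₀ A D‖ := h1
      _ ≤ ‖A‖ + ‖A‖ := by linarith
      _ ≤ 2 * C := by linarith
  set u' : H n Q q₀ :=
    ∑ f : {x // x ∈ D} → Q, ((u i) (FD q₀ D f)) • eVec (FD q₀ D f) with hu'def
  set v' : H n Q q₀ :=
    ∑ f : {x // x ∈ D} → Q, ((v i) (FD q₀ D f)) • eVec (FD q₀ D f) with hv'def
  -- tail estimates
  have herru : ‖u i - u'‖ ≤ δ := by
    have h1 := proj_err_le D (u i) W hWsum (hWu i) s hsD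
    have h2 : ‖u i - u'‖ ^ 2 < δ ^ 2 := lt_of_le_of_lt (by rw [hu'def]; exact h1) hs
    nlinarith [norm_nonneg (u i - u'), hδpos]
  have herrv : ‖v i - v'‖ ≤ δ := by
    have h1 := proj_err_le D (v i) W hWsum (hWv i) s hsD
    have h2 : ‖v i - v'‖ ^ 2 < δ ^ 2 := lt_of_le_of_lt (by rw [hv'def]; exact h1) hs
    nlinarith [norm_nonneg (v i - v'), hδpos]
  have hv'norm : ‖v'‖ ≤ ‖v i‖ + δ := by
    have h1 : v' = v i - (v i - v') := by abel
    calc ‖v'‖ = ‖v i - (v i - v')‖ := by rw [← h1]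
      _ ≤ ‖v i‖ + ‖v i - v'‖ := norm_sub_le _ _
      _ ≤ ‖v i‖ + δ := by linarith
  -- the cross term vanishes
  have hzero : (inner ℂ u' (B v') : ℂ) = 0 := by
    rw [hu'def, hv'def, hBdef]
    exact inner_proj_zero A D (u i) (v i)
  -- decompose the inner product
  have hsplit : (inner ℂ (u i) (B (v i)) : ℂ) =
      inner ℂ u' (B v') + (inner ℂ (u i - u') (B v') + inner ℂ (u i) (B (v i - v'))) := by
    have e1 : B (v i) = B v' + B (v i - v') := by
      rw [← map_add]
      congr 1
      abel
    have e2 : (inner ℂ (u i) (B v') : ℂ) = inner ℂ u' (B v') + inner ℂ (u i - u') (B v') := by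
      rw [← inner_add_left]
      congr 1
      abel
    rw [e1, inner_add_right, e2]
    ring
  have hgoal : A (v i) - TOp q₀ A D (v i) = B (v i) := by
    rw [hBdef, ContinuousLinearMap.sub_apply]
  rw [hgoal, hsplit, hzero, zero_add]
  -- final estimate
  have f3 : ‖B v'‖ ≤ ‖B‖ * ‖v'‖ := B.le_opNorm v'
  have f4 : ‖B (v i - v')‖ ≤ ‖B‖ * ‖v i - v'‖ := B.le_opNorm _
  have hBnn : 0 ≤ ‖B‖ := norm_nonneg _
  have huin : ‖u i‖ ≤ N := hNu i
  have hvin : ‖v i‖ ≤ N := hNv i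
  calc ‖(inner ℂ (u i - u') (B v') : ℂ) + (inner ℂ (u i) (B (v i - v')) : ℂ)‖
      ≤ ‖(inner ℂ (u i - u') (B v') : ℂ)‖ + ‖(inner ℂ (u i) (B (v i - v')) : ℂ)‖ :=
        norm_add_le _ _
    _ ≤ ‖u i - u'‖ * ‖B v'‖ + ‖u i‖ * ‖B (v i - v')‖ :=
        add_le_add (norm_inner_le_norm _ _) (norm_inner_le_norm _ _)
    _ ≤ δ * (2 * C * (N + 1)) + N * (2 * C * δ) := by
        have g1 : ‖B v'‖ ≤ 2 * C * (N + 1) := by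
          calc ‖B v'‖ ≤ ‖B‖ * ‖v'‖ := f3
            _ ≤ (2 * C) * (N + 1) := by
                apply mul_le_mul hBnorm _ (norm_nonneg _) (by positivity)
                linarith
        have g2 : ‖B (v i - v')‖ ≤ 2 * C * δ := by
          calc ‖B (v i - v')‖ ≤ ‖B‖ * ‖v i - v'‖ := f4
            _ ≤ (2 * C) * δ := mul_le_mul hBnorm herrv (norm_nonneg _) (by positivity)
        have g3 : 0 ≤ ‖u i - u'‖ := norm_nonneg _
        have g4 : ‖u i - u'‖ * ‖B v'‖ ≤ δ * (2 * C * (N + 1)) :=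
          mul_le_mul herru g1 (norm_nonneg _) (le_of_lt hδpos)
        have g5 : ‖u i‖ * ‖B (v i - v')‖ ≤ N * (2 * C * δ) :=
          mul_le_mul huin g2 (norm_nonneg _) (by linarith)
        linarith
    _ < ε := by nlinarith [hδpos, hC1, hN1, hδ2, hε, hδ1]

end QCA
end
end

section
/- (Structural Reversibility.) Let M be a unitary operator on H and 𝒩 ⊆ ℤ^n a finite neighborhood. Then the following are equivalent: (a) for every x ∈ ℤ^n and every bounded operator A local upon {x}, M† A M is local upon 𝒩_x; (b) for every x ∈ ℤ^n and every bounded operator A local upon {x}, M A M† is local upon 𝒱_x. -/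
open scoped ENNReal

noncomputable section

namespace QCA

section SR

open scoped Classical

set_option linter.unusedSectionVars false

variable {n : ℕ} {Q : Type} [Fintype Q] {q₀ : Q}

lemma conf_ext {c c' : Conf n Q q₀} (h : ∀ x, c.1 x = c'.1 x) : c = c' :=
  Subtype.ext (funext h)

lemma updateConf_apply (y : Lat n) (r : Q) (c : Conf n Q q₀) (z : Lat n) :
    (updateConf y r c).1 z = if z = y then r else c.1 z := by
  simp [updateConf, Function.update_apply]

lemma updateConf_self (y : Lat n) (c : Conf n Q q₀) : updateConf y (c.1 y) c = c :=
  conf_ext fun z => by rw [updateConf_apply]; split <;> simp_all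

lemma updateConf_idem (y : Lat n) (r s : Q) (c : Conf n Q q₀) :
    updateConf y r (updateConf y s c) = updateConf y r c :=
  conf_ext fun z => by
    rw [updateConf_apply, updateConf_apply, updateConf_apply]; split <;> rfl

lemma eVec_coe (c d : Conf n Q q₀) :
    (eVec c : ∀ _ : Conf n Q q₀, ℂ) d = if d = c then 1 else 0 := by
  rw [eVec]
  rw [lp.single_apply]
  split
  · rename_i h; subst h; simp
  · rename_i h; simp [Pi.single_apply, h]


lemma single_eq_smul_eVec (v : H n Q q₀) (c : Conf n Q q₀) :
    (lp.single 2 c (v c) : H n Q q₀) = v c • eVec c := by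
  rw [eVec, ← lp.single_smul, smul_eq_mul, mul_one]

lemma clm_ext {T S : H n Q q₀ →L[ℂ] H n Q q₀} (h : ∀ c, T (eVec c) = S (eVec c)) : T = S := by
  refine ContinuousLinearMap.ext fun v => ?_
  have hs := lp.hasSum_single (E := fun _ : Conf n Q q₀ => ℂ) (by norm_num) v
  have h1 : HasSum (fun c => T (lp.single 2 c (v c))) (T v) := hs.mapL T
  have h2 : HasSum (fun c => S (lp.single 2 c (v c))) (S v) := hs.mapL S
  refine h1.unique ?_
  refine HasSum.congr_fun h2 fun c => ?_
  rw [single_eq_smul_eVec, map_smul, map_smul, h]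

lemma memℓp_mul (χ : Conf n Q q₀ → ℂ) (hχ : ∀ c, ‖χ c‖ ≤ 1) (v : H n Q q₀) :
    Memℓp (fun c => χ c * v c) 2 := by
  refine memℓp_gen ?_
  have hv : Summable (fun c : Conf n Q q₀ => ‖v c‖ ^ (2 : ℝ≥0∞).toReal) :=
    (lp.memℓp v).summable (by norm_num)
  refine hv.of_nonneg_of_le (fun c => by positivity) (fun c => ?_)
  have h1 : ‖χ c * v c‖ ≤ ‖v c‖ := by
    rw [norm_mul]
    calc ‖χ c‖ * ‖v c‖ ≤ 1 * ‖v c‖ := by gcongr; exact hχ c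
    _ = ‖v c‖ := one_mul _
  exact Real.rpow_le_rpow (norm_nonneg _) h1 (by norm_num)

def mulOp (χ : Conf n Q q₀ → ℂ) (hχ : ∀ c, ‖χ c‖ ≤ 1) : H n Q q₀ →L[ℂ] H n Q q₀ :=
  LinearMap.mkContinuous
    { toFun := fun v => (⟨fun c => χ c * v c, memℓp_mul χ hχ v⟩ : H n Q q₀)
      map_add' := fun f g => lp.ext (funext fun c => by
        simp [lp.coeFn_add, mul_add] <;> rfl)
      map_smul' := fun r f => lp.ext (funext fun c => by
        simp [lp.coeFn_smul]; ring) } 1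
    (fun v => by
      rw [one_mul]
      have hp : (0 : ℝ) < (2 : ℝ≥0∞).toReal := by norm_num
      have hle : ∀ c : Conf n Q q₀, ‖χ c * v c‖ ≤ ‖v c‖ := fun c => by
        rw [norm_mul]
        calc ‖χ c‖ * ‖v c‖ ≤ 1 * ‖v c‖ := by gcongr; exact hχ c
        _ = ‖v c‖ := one_mul _
      rw [lp.norm_eq_tsum_rpow hp, lp.norm_eq_tsum_rpow hp]
      refine Real.rpow_le_rpow (tsum_nonneg fun c => by positivity) ?_ (by norm_num)
      refine Summable.tsum_le_tsum (fun c => ?_) ((memℓp_mul χ hχ v).summable hp)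
        ((lp.memℓp v).summable hp)
      exact Real.rpow_le_rpow (norm_nonneg _) (hle c) (by norm_num))

lemma mulOp_coe (χ : Conf n Q q₀ → ℂ) (hχ : ∀ c, ‖χ c‖ ≤ 1) (v : H n Q q₀)
    (d : Conf n Q q₀) : (mulOp χ hχ v : ∀ _ : Conf n Q q₀, ℂ) d = χ d * v d := rfl


def siteSwap (y : Lat n) (r s : Q) : Conf n Q q₀ ≃ Conf n Q q₀ where
  toFun c := updateConf y (Equiv.swap r s (c.1 y)) c
  invFun c := updateConf y (Equiv.swap r s (c.1 y)) c
  left_inv c := by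
    refine conf_ext fun z => ?_
    rw [updateConf_apply]
    by_cases hz : z = y
    · subst hz
      rw [if_pos rfl, updateConf_apply, if_pos rfl, Equiv.swap_apply_self]
    · rw [if_neg hz, updateConf_apply, if_neg hz]
  right_inv c := by
    refine conf_ext fun z => ?_
    rw [updateConf_apply]
    by_cases hz : z = y
    · subst hz
      rw [if_pos rfl, updateConf_apply, if_pos rfl, Equiv.swap_apply_self]
    · rw [if_neg hz, updateConf_apply, if_neg hz]

def matUnit (y : Lat n) (r s : Q) : H n Q q₀ →L[ℂ] H n Q q₀ :=
  (isomCLM (lpCongr (siteSwap (q₀ := q₀) y r s))) ∘L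
    mulOp (fun c => if c.1 y = s then 1 else 0) (fun c => by split <;> simp)

lemma matUnit_coe (y : Lat n) (r s : Q) (v : H n Q q₀) (d : Conf n Q q₀) :
    (matUnit y r s v : ∀ _ : Conf n Q q₀, ℂ) d =
      if d.1 y = r then v (updateConf y s d) else 0 := by
  have h0 : (matUnit y r s v : ∀ _ : Conf n Q q₀, ℂ) d =
      (if (updateConf y (Equiv.swap r s (d.1 y)) d).1 y = s then (1 : ℂ) else 0) *
        v (updateConf y (Equiv.swap r s (d.1 y)) d) := rfl
  rw [h0, updateConf_apply, if_pos rfl]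
  by_cases h : d.1 y = r
  · rw [h, Equiv.swap_apply_left, if_pos rfl, one_mul, if_pos rfl]
  · have hs : Equiv.swap r s (d.1 y) ≠ s := fun hc =>
      h ((Equiv.swap r s).injective (hc.trans (Equiv.swap_apply_left r s).symm))
    rw [if_neg hs, zero_mul, if_neg h]

lemma matUnit_eVec (y : Lat n) (r s : Q) (c : Conf n Q q₀) :
    matUnit y r s (eVec c) = if c.1 y = s then eVec (updateConf y r c) else 0 := by
  by_cases h3 : c.1 y = s
  · rw [if_pos h3]
    apply lp.ext; funext d
    rw [matUnit_coe, eVec_coe]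
    by_cases h1 : d.1 y = r
    · rw [if_pos h1, eVec_coe]
      by_cases h2 : updateConf y s d = c
      · rw [if_pos h2, if_pos]
        rw [← h2, updateConf_idem, ← h1, updateConf_self]
      · rw [if_neg h2, if_neg]
        intro hd; apply h2
        rw [hd, updateConf_idem, ← h3, updateConf_self]
    · rw [if_neg h1, eVec_coe, if_neg]
      intro hd; apply h1
      rw [hd, updateConf_apply, if_pos rfl]
  · rw [if_neg h3]
    apply lp.ext; funext d
    rw [matUnit_coe]
    have hz : ((0 : H n Q q₀) : ∀ _ : Conf n Q q₀, ℂ) d = 0 := rfl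
    rw [hz]
    by_cases h1 : d.1 y = r
    · rw [if_pos h1, eVec_coe, if_neg]
      intro h2; apply h3; rw [← h2, updateConf_apply, if_pos rfl]
    · rw [if_neg h1]

lemma override_mem {D : Finset (Lat n)} (f : {x // x ∈ D} → Q) (c : Conf n Q q₀)
    {z : Lat n} (hz : z ∈ D) : (override D f c).1 z = f ⟨z, hz⟩ := dif_pos hz

lemma override_not_mem {D : Finset (Lat n)} (f : {x // x ∈ D} → Q) (c : Conf n Q q₀)
    {z : Lat n} (hz : z ∉ D) : (override D f c).1 z = c.1 z := dif_neg hz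

lemma override_singleton (y : Lat n) (f : {x // x ∈ ({y} : Finset (Lat n))} → Q)
    (c : Conf n Q q₀) :
    override {y} f c = updateConf y (f ⟨y, Finset.mem_singleton_self y⟩) c :=
  conf_ext fun z => by
    rw [updateConf_apply]
    by_cases hz : z = y
    · subst hz
      rw [override_mem f c (Finset.mem_singleton_self z)]; simp
    · rw [override_not_mem _ _ (by simp [hz]), if_neg hz]

lemma matUnit_local (y : Lat n) (r s : Q) :
    IsLocalUpon q₀ {y} (matUnit (q₀ := q₀) y r s) := by
  refine ⟨fun f g => (if f ⟨y, Finset.mem_singleton_self y⟩ = r then 1 else 0) *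
      (if g ⟨y, Finset.mem_singleton_self y⟩ = s then 1 else 0), fun c => ?_⟩
  rw [matUnit_eVec]
  rw [Fintype.sum_eq_single (fun _ => r : {x // x ∈ ({y} : Finset (Lat n))} → Q) ?_]
  · rw [override_singleton]
    by_cases h3 : c.1 y = s
    · simp [h3]
    · simp [h3]
  · intro f hf
    have hfy : f ⟨y, Finset.mem_singleton_self y⟩ ≠ r := by
      intro hr; apply hf; funext z
      have hz : z = ⟨y, Finset.mem_singleton_self y⟩ :=
        Subtype.ext (Finset.mem_singleton.mp z.2)
      rw [hz, hr]
    dsimp only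
    rw [if_neg hfy, zero_mul, zero_smul]


lemma override_restrict_eq {D₁ D₂ : Finset (Lat n)} (hD : Disjoint D₁ D₂)
    (g : {x // x ∈ D₂} → Q) (c : Conf n Q q₀) (z : {x // x ∈ D₁}) :
    (override D₂ g c).1 z.1 = c.1 z.1 :=
  override_not_mem _ _ (Finset.disjoint_left.mp hD z.2)

lemma override_comm {D₁ D₂ : Finset (Lat n)} (hD : Disjoint D₁ D₂)
    (f : {x // x ∈ D₁} → Q) (g : {x // x ∈ D₂} → Q) (c : Conf n Q q₀) :
    override D₁ f (override D₂ g c) = override D₂ g (override D₁ f c) :=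
  conf_ext fun z => by
    by_cases h1 : z ∈ D₁
    · have h2 : z ∉ D₂ := Finset.disjoint_left.mp hD h1
      rw [override_mem _ _ h1, override_not_mem _ _ h2, override_mem _ _ h1]
    · rw [override_not_mem _ _ h1]
      by_cases h2 : z ∈ D₂
      · rw [override_mem _ _ h2, override_mem _ _ h2]
      · rw [override_not_mem _ _ h2, override_not_mem _ _ h2, override_not_mem _ _ h1]

lemma local_commute {D₁ D₂ : Finset (Lat n)} (hD : Disjoint D₁ D₂)
    {A B : H n Q q₀ →L[ℂ] H n Q q₀} (hA : IsLocalUpon q₀ D₁ A) (hB : IsLocalUpon q₀ D₂ B) :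
    A ∘L B = B ∘L A := by
  obtain ⟨a, ha⟩ := hA
  obtain ⟨b, hb⟩ := hB
  refine clm_ext fun c => ?_
  have e1 : (A ∘L B) (eVec c) = ∑ g : {x // x ∈ D₂} → Q, ∑ f : {x // x ∈ D₁} → Q,
      (a f (fun x => c.1 x.1) * b g (fun x => c.1 x.1)) •
        eVec (override D₁ f (override D₂ g c)) := by
    rw [ContinuousLinearMap.comp_apply, hb c, map_sum]
    refine Finset.sum_congr rfl fun g _ => ?_
    rw [map_smul, ha]
    rw [Finset.smul_sum]
    refine Finset.sum_congr rfl fun f _ => ?_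
    have hres : (fun x : {x // x ∈ D₁} => (override D₂ g c).1 x.1) = fun x => c.1 x.1 :=
      funext fun x => override_restrict_eq hD g c x
    rw [hres, smul_smul, mul_comm]
  have e2 : (B ∘L A) (eVec c) = ∑ f : {x // x ∈ D₁} → Q, ∑ g : {x // x ∈ D₂} → Q,
      (a f (fun x => c.1 x.1) * b g (fun x => c.1 x.1)) •
        eVec (override D₂ g (override D₁ f c)) := by
    rw [ContinuousLinearMap.comp_apply, ha c, map_sum]
    refine Finset.sum_congr rfl fun f _ => ?_
    rw [map_smul, hb]
    rw [Finset.smul_sum]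
    refine Finset.sum_congr rfl fun g _ => ?_
    have hres : (fun x : {x // x ∈ D₂} => (override D₁ f c).1 x.1) = fun x => c.1 x.1 :=
      funext fun x => override_restrict_eq hD.symm f c x
    rw [hres, smul_smul, mul_comm]
  rw [e1, e2, Finset.sum_comm]
  refine Finset.sum_congr rfl fun f _ => Finset.sum_congr rfl fun g _ => ?_
  rw [override_comm hD]


def tmat (N : H n Q q₀ →L[ℂ] H n Q q₀) (c' c : Conf n Q q₀) : ℂ :=
  (N (eVec c) : ∀ _ : Conf n Q q₀, ℂ) c'

lemma key {D : Finset (Lat n)} {N : H n Q q₀ →L[ℂ] H n Q q₀}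
    (hcomm : ∀ y ∉ D, ∀ r s : Q, N ∘L matUnit y r s = matUnit y r s ∘L N)
    {y : Lat n} (hy : y ∉ D) (r s : Q) (c c' : Conf n Q q₀) :
    (if c.1 y = s then tmat N c' (updateConf y r c) else 0)
      = if c'.1 y = r then tmat N (updateConf y s c') c else 0 := by
  have h : N (matUnit y r s (eVec c)) = matUnit y r s (N (eVec c)) := by
    rw [← ContinuousLinearMap.comp_apply, ← ContinuousLinearMap.comp_apply, hcomm y hy r s]
  have h2 := congrArg (fun w : H n Q q₀ => (w : ∀ _ : Conf n Q q₀, ℂ) c') h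
  dsimp only at h2
  rw [matUnit_eVec, matUnit_coe] at h2
  simp only [tmat]
  rw [← h2]
  by_cases h3 : c.1 y = s
  · rw [if_pos h3, if_pos h3]
  · rw [if_neg h3, if_neg h3, map_zero]
    rfl

lemma vanish {D : Finset (Lat n)} {N : H n Q q₀ →L[ℂ] H n Q q₀}
    (hcomm : ∀ y ∉ D, ∀ r s : Q, N ∘L matUnit y r s = matUnit y r s ∘L N)
    {c c' : Conf n Q q₀} {y : Lat n} (hy : y ∉ D) (hne : c'.1 y ≠ c.1 y) :
    tmat N c' c = 0 := by
  have h := key hcomm hy (c.1 y) (c.1 y) c c'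
  rw [if_pos rfl, updateConf_self, if_neg hne] at h
  exact h

lemma step {D : Finset (Lat n)} {N : H n Q q₀ →L[ℂ] H n Q q₀}
    (hcomm : ∀ y ∉ D, ∀ r s : Q, N ∘L matUnit y r s = matUnit y r s ∘L N)
    {y : Lat n} (hy : y ∉ D) (r : Q) {c c' : Conf n Q q₀} (h : c'.1 y = c.1 y) :
    tmat N (updateConf y r c') (updateConf y r c) = tmat N c' c := by
  have hk := key hcomm hy r (c.1 y) c (updateConf y r c')
  rw [if_pos rfl] at hk
  rw [hk, if_pos (by rw [updateConf_apply, if_pos rfl]), updateConf_idem, ← h,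
    updateConf_self]

lemma reduce {D : Finset (Lat n)} {N : H n Q q₀ →L[ℂ] H n Q q₀}
    (hcomm : ∀ y ∉ D, ∀ r s : Q, N ∘L matUnit y r s = matUnit y r s ∘L N) :
    ∀ (k : ℕ) (c c' : Conf n Q q₀), (∀ y ∉ D, c'.1 y = c.1 y) →
      ((suppF c).filter (fun z => z ∉ D)).card ≤ k →
      tmat N c' c = tmat N (override D (fun z => c'.1 z.1) (c0 n Q q₀))
        (override D (fun z => c.1 z.1) (c0 n Q q₀)) := by
  have base : ∀ c c' : Conf n Q q₀, (∀ y ∉ D, c'.1 y = c.1 y) →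
      (∀ y ∉ D, c.1 y = q₀) →
      tmat N c' c = tmat N (override D (fun z => c'.1 z.1) (c0 n Q q₀))
        (override D (fun z => c.1 z.1) (c0 n Q q₀)) := by
    intro c c' hagree hq
    have hc : override D (fun z => c.1 z.1) (c0 n Q q₀) = c :=
      conf_ext fun z => by
        by_cases hz : z ∈ D
        · rw [override_mem _ _ hz]
        · rw [override_not_mem _ _ hz]
          exact (hq z hz).symm
    have hc' : override D (fun z => c'.1 z.1) (c0 n Q q₀) = c' :=
      conf_ext fun z => by
        by_cases hz : z ∈ D
        · rw [override_mem _ _ hz]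
        · rw [override_not_mem _ _ hz]
          rw [hagree z hz, hq z hz]
          rfl
    rw [hc, hc']
  intro k
  induction k with
  | zero =>
    intro c c' hagree hcard
    refine base c c' hagree fun y hy => ?_
    by_contra hne
    have hmem : y ∈ (suppF c).filter (fun z => z ∉ D) := by
      rw [Finset.mem_filter]
      exact ⟨(Set.Finite.mem_toFinset _).mpr hne, hy⟩
    have := Finset.card_pos.mpr ⟨y, hmem⟩
    omega
  | succ k ih =>
    intro c c' hagree hcard
    by_cases hE : (suppF c).filter (fun z => z ∉ D) = ∅
    · refine base c c' hagree fun y hy => ?_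
      by_contra hne
      have hmem : y ∈ (suppF c).filter (fun z => z ∉ D) := by
        rw [Finset.mem_filter]
        exact ⟨(Set.Finite.mem_toFinset _).mpr hne, hy⟩
      rw [hE] at hmem
      exact absurd hmem (Finset.notMem_empty y)
    · obtain ⟨y, hy⟩ := Finset.nonempty_of_ne_empty hE
      rw [Finset.mem_filter] at hy
      obtain ⟨hysupp, hyD⟩ := hy
      have h1 : tmat N c' c = tmat N (updateConf y q₀ c') (updateConf y q₀ c) :=
        (step hcomm hyD q₀ (hagree y hyD)).symm
      have hagree' : ∀ z ∉ D, (updateConf y q₀ c').1 z = (updateConf y q₀ c).1 z := by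
        intro z hz
        rw [updateConf_apply, updateConf_apply]
        split
        · rfl
        · exact hagree z hz
      have hsub : (suppF (updateConf y q₀ c)).filter (fun z => z ∉ D) ⊆
          ((suppF c).filter (fun z => z ∉ D)).erase y := by
        intro z hz
        rw [Finset.mem_filter, suppF, Set.Finite.mem_toFinset] at hz
        obtain ⟨hz1, hz2⟩ := hz
        rw [Set.mem_setOf_eq, updateConf_apply] at hz1
        rw [Finset.mem_erase, Finset.mem_filter, suppF, Set.Finite.mem_toFinset]
        by_cases hzy : z = y
        · rw [if_pos hzy] at hz1
          exact absurd rfl hz1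
        · rw [if_neg hzy] at hz1
          exact ⟨hzy, hz1, hz2⟩
      have hcard' : ((suppF (updateConf y q₀ c)).filter (fun z => z ∉ D)).card ≤ k := by
        have h2 := Finset.card_le_card hsub
        have h3 : y ∈ (suppF c).filter (fun z => z ∉ D) := by
          rw [Finset.mem_filter]
          exact ⟨hysupp, hyD⟩
        have h4 := Finset.card_erase_of_mem h3
        have h5 := Finset.card_pos.mpr ⟨y, h3⟩
        omega
      rw [h1, ih (updateConf y q₀ c) (updateConf y q₀ c') hagree' hcard']
      have hrc : (fun z : {x // x ∈ D} => (updateConf y q₀ c).1 z.1) =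
          fun z : {x // x ∈ D} => c.1 z.1 := funext fun z => by
        rw [updateConf_apply, if_neg]
        intro hzy
        exact hyD (hzy ▸ z.2)
      have hrc' : (fun z : {x // x ∈ D} => (updateConf y q₀ c').1 z.1) =
          fun z : {x // x ∈ D} => c'.1 z.1 := funext fun z => by
        rw [updateConf_apply, if_neg]
        intro hzy
        exact hyD (hzy ▸ z.2)
      rw [hrc, hrc']

lemma local_of_commute {D : Finset (Lat n)} {N : H n Q q₀ →L[ℂ] H n Q q₀}
    (hcomm : ∀ y ∉ D, ∀ r s : Q, N ∘L matUnit y r s = matUnit y r s ∘L N) :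
    IsLocalUpon q₀ D N := by
  refine ⟨fun f g => tmat N (override D f (c0 n Q q₀)) (override D g (c0 n Q q₀)),
    fun c => ?_⟩
  apply lp.ext; funext c'
  have hrhs : ((∑ f : {x // x ∈ D} → Q,
      tmat N (override D f (c0 n Q q₀)) (override D (fun x => c.1 x.1) (c0 n Q q₀)) •
        eVec (override D f c) : H n Q q₀) : ∀ _ : Conf n Q q₀, ℂ) c' =
      ∑ f : {x // x ∈ D} → Q,
        tmat N (override D f (c0 n Q q₀)) (override D (fun x => c.1 x.1) (c0 n Q q₀)) *
          (if c' = override D f c then 1 else 0) := by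
    rw [lp.coeFn_sum, Finset.sum_apply]
    refine Finset.sum_congr rfl fun f _ => ?_
    rw [lp.coeFn_smul, Pi.smul_apply, eVec_coe, smul_eq_mul]
  rw [hrhs]
  by_cases hag : ∀ y ∉ D, c'.1 y = c.1 y
  · have hc' : override D (fun z => c'.1 z.1) c = c' :=
      conf_ext fun z => by
        by_cases hz : z ∈ D
        · rw [override_mem _ _ hz]
        · rw [override_not_mem _ _ hz]
          exact (hag z hz).symm
    rw [Fintype.sum_eq_single (fun z : {x // x ∈ D} => c'.1 z.1) ?_]
    · rw [if_pos hc'.symm, mul_one]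
      exact reduce hcomm ((suppF c).filter (fun z => z ∉ D)).card c c' hag le_rfl
    · intro f hf
      rw [if_neg, mul_zero]
      intro hce
      apply hf
      funext z
      rw [hce]
      rw [override_mem _ _ z.2]
  · push_neg at hag
    obtain ⟨y, hy, hne⟩ := hag
    have hl : (N (eVec c) : ∀ _ : Conf n Q q₀, ℂ) c' = 0 := vanish hcomm hy hne
    rw [hl]
    symm
    refine Finset.sum_eq_zero fun f _ => ?_
    rw [if_neg, mul_zero]
    intro hce
    apply hne
    rw [hce, override_not_mem _ _ hy]


lemma conj_comm_monoid {G : Type*} [Monoid G] {m m' a e : G} (h1 : m' * m = 1)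
    (h2 : m * m' = 1) (hc : a * (m' * (e * m)) = (m' * (e * m)) * a) :
    m * (a * m') * e = e * (m * (a * m')) := by
  calc m * (a * m') * e
      = m * (a * m') * e * (m * m') := by rw [h2, mul_one]
    _ = m * (a * (m' * (e * m)) * m') := by simp only [← mul_assoc]
    _ = m * (m' * (e * m) * a * m') := by rw [hc]
    _ = e * (m * (a * m')) := by
        simp only [← mul_assoc]
        rw [h2, one_mul]

lemma causal_rev {𝒩 : Finset (Lat n)} {M : H n Q q₀ →L[ℂ] H n Q q₀}
    (h1 : ContinuousLinearMap.adjoint M * M = 1)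
    (h2 : M * ContinuousLinearMap.adjoint M = 1)
    (h : ∀ (x : Lat n) (A : H n Q q₀ →L[ℂ] H n Q q₀), IsLocalUpon q₀ {x} A →
      IsLocalUpon q₀ (nbhd 𝒩 x) (ContinuousLinearMap.adjoint M ∘L A ∘L M)) :
    ∀ (x : Lat n) (A : H n Q q₀ →L[ℂ] H n Q q₀), IsLocalUpon q₀ {x} A →
      IsLocalUpon q₀ (rnbhd 𝒩 x) (M ∘L A ∘L ContinuousLinearMap.adjoint M) := by
  intro x A hA
  apply local_of_commute
  intro y hy r s
  have hB' := h y (matUnit y r s) (matUnit_local y r s)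
  have hdisj : Disjoint ({x} : Finset (Lat n)) (nbhd 𝒩 y) := by
    rw [Finset.disjoint_left]
    intro z hz hzN
    rw [Finset.mem_singleton] at hz
    subst hz
    rw [nbhd, Finset.mem_image] at hzN
    obtain ⟨k, hk, hke⟩ := hzN
    apply hy
    rw [rnbhd, Finset.mem_image]
    exact ⟨k, hk, by rw [← hke]; exact add_sub_cancel_right y k⟩
  have hcomm := local_commute hdisj hA hB'
  exact conj_comm_monoid h1 h2 hcomm

end SR





/-- Structural Reversibility. For a unitary `M` and a neighborhood `𝒩`:
conjugation by `M` maps one-cell operators to operators local upon `𝒩_x` if and only if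
conjugation by `M†` maps one-cell operators to operators local upon `𝒱_x`. -/
theorem structural_reversibility
    (n : ℕ) (hn : 1 ≤ n) (Q : Type) [Fintype Q] (q₀ : Q) (𝒩 : Finset (Lat n))
    (M : H n Q q₀ →L[ℂ] H n Q q₀) (hM : M ∈ unitary (H n Q q₀ →L[ℂ] H n Q q₀)) :
    (∀ (x : Lat n) (A : H n Q q₀ →L[ℂ] H n Q q₀), IsLocalUpon q₀ {x} A →
        IsLocalUpon q₀ (nbhd 𝒩 x) (ContinuousLinearMap.adjoint M ∘L A ∘L M)) ↔
      (∀ (x : Lat n) (A : H n Q q₀ →L[ℂ] H n Q q₀), IsLocalUpon q₀ {x} A →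
        IsLocalUpon q₀ (rnbhd 𝒩 x) (M ∘L A ∘L ContinuousLinearMap.adjoint M)) := by
  have hadj : ContinuousLinearMap.adjoint M * M = 1 := by
    rw [← ContinuousLinearMap.star_eq_adjoint]
    exact (Unitary.mem_iff.mp hM).1
  have hadj2 : M * ContinuousLinearMap.adjoint M = 1 := by
    rw [← ContinuousLinearMap.star_eq_adjoint]
    exact (Unitary.mem_iff.mp hM).2
  constructor
  · intro h
    exact causal_rev hadj hadj2 h
  · intro h x A hA
    have hMM : ContinuousLinearMap.adjoint (ContinuousLinearMap.adjoint M) = M :=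
      ContinuousLinearMap.adjoint_adjoint M
    have hn : ∀ x' : Lat n, nbhd (𝒩.image (fun k => -k)) x' = rnbhd 𝒩 x' := fun x' => by
      ext z
      rw [nbhd, rnbhd]
      simp only [Finset.mem_image]
      constructor
      · rintro ⟨k', ⟨k, hk, rfl⟩, rfl⟩
        exact ⟨k, hk, (sub_eq_add_neg x' k).symm⟩
      · rintro ⟨k, hk, rfl⟩
        exact ⟨-k, ⟨k, hk, rfl⟩, (sub_eq_add_neg x' k).symm⟩
    have hr : ∀ x' : Lat n, rnbhd (𝒩.image (fun k => -k)) x' = nbhd 𝒩 x' := fun x' => by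
      ext z
      rw [nbhd, rnbhd]
      simp only [Finset.mem_image]
      constructor
      · rintro ⟨k', ⟨k, hk, rfl⟩, rfl⟩
        exact ⟨k, hk, (sub_neg_eq_add x' k).symm⟩
      · rintro ⟨k, hk, rfl⟩
        exact ⟨-k, ⟨k, hk, rfl⟩, sub_neg_eq_add x' k⟩
    have hyp : ∀ (x' : Lat n) (A' : H n Q q₀ →L[ℂ] H n Q q₀), IsLocalUpon q₀ {x'} A' →
        IsLocalUpon q₀ (nbhd (𝒩.image (fun k => -k)) x')
          (ContinuousLinearMap.adjoint (ContinuousLinearMap.adjoint M) ∘L A' ∘L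
            ContinuousLinearMap.adjoint M) := by
      intro x' A' hA'
      rw [hn, hMM]
      exact h x' A' hA'
    have hres := causal_rev (𝒩 := 𝒩.image (fun k => -k))
      (M := ContinuousLinearMap.adjoint M) (by rw [hMM]; exact hadj2)
      (by rw [hMM]; exact hadj) hyp x A hA
    rw [hr x, hMM] at hres
    exact hres

end QCA
end
end
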